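/- arXiv:1910.07125 — 4 statements merged into one kernel-verified Lean document; each statement's English description precedes it below -/
import Mathlib

section
/- Let T be a tree on n vertices with geodesic distance (Wiener index) S. Then the geodesic distance of the first-order subdivision of T equals 8S − 2n(n−1). -/
/-- The geodesic distance (Wiener index) of a finite simple graph: the sum of the graph
distances over all unordered pairs of distinct vertices. -/
noncomputable def wienerIndex {V : Type} [Fintype V] (G : SimpleGraph V) : ℕ :=
  (∑ u : V, ∑ v : V, G.dist u v) / 2

/-- The first-order subdivision of a simple graph `G = (V, E)`: the bipartite graph on
`V ⊕ E` where `v : V` is adjacent to `e : E` iff `v` is an endpoint of `e`. -/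
def firstSubdivision {V : Type} (G : SimpleGraph V) : SimpleGraph (V ⊕ G.edgeSet) :=
  SimpleGraph.fromRel fun a b =>
    match a, b with
    | Sum.inl v, Sum.inr e => v ∈ (e : Sym2 V)
    | _, _ => False


open SimpleGraph Finset Sum

section TreeAux

variable {V : Type} {G : SimpleGraph V}

/-- Sum of distances from `v` to the two endpoints of `e`. -/
noncomputable def dSum (G : SimpleGraph V) (v : V) (e : Sym2 V) : ℕ :=
  Sym2.lift ⟨fun a b => G.dist v a + G.dist v b, fun _ _ => add_comm _ _⟩ e

@[simp] lemma dSum_mk (v a b : V) : dSum G v s(a, b) = G.dist v a + G.dist v b := rfl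

lemma geo_split {u v z : V} {p : G.Walk u v} (hlen : p.length = G.dist u v)
    (hz : z ∈ p.support) : G.dist u z + G.dist z v ≤ G.dist u v := by
  obtain ⟨q, r, rfl⟩ := SimpleGraph.Walk.mem_support_iff_exists_append.mp hz
  rw [← hlen, SimpleGraph.Walk.length_append]
  exact add_le_add (SimpleGraph.dist_le q) (SimpleGraph.dist_le r)

variable (hG : G.IsTree)
include hG

lemma walk_eq_of_isPath {u v : V} {p q : G.Walk u v} (hp : p.IsPath) (hq : q.IsPath) :
    p = q :=
  (hG.existsUnique_path u v).unique hp hq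

lemma dist_ne_of_adj {a b : V} (hab : G.Adj a b) (v : V) : G.dist v a ≠ G.dist v b := by
  intro h
  obtain ⟨p, hp, hplen⟩ := hG.isConnected.exists_path_of_dist v a
  obtain ⟨q, hq, hqlen⟩ := hG.isConnected.exists_path_of_dist v b
  have hba : G.dist b a ≠ 0 := fun h0 =>
    hab.ne (((hab.symm.reachable).dist_eq_zero_iff).mp h0).symm
  have hbp : b ∉ p.support := by
    intro hb
    have := geo_split hplen hb
    omega
  have hcat : (p.concat hab).IsPath := by
    rw [← SimpleGraph.Walk.isPath_reverse_iff, SimpleGraph.Walk.reverse_concat]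
    exact hp.reverse.cons (by simpa using hbp)
  have heq := walk_eq_of_isPath hG hcat hq
  have hlen := congrArg SimpleGraph.Walk.length heq
  rw [SimpleGraph.Walk.length_concat, hplen, hqlen] at hlen
  omega

lemma dist_adj_cases {a b : V} (hab : G.Adj a b) (v : V) :
    G.dist v b = G.dist v a + 1 ∨ G.dist v a = G.dist v b + 1 := by
  have h1 : G.dist v b ≤ G.dist v a + G.dist a b := hG.isConnected.dist_triangle
  have h2 : G.dist v a ≤ G.dist v b + G.dist b a := hG.isConnected.dist_triangle
  have h3 : G.dist a b ≤ 1 := by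
    simpa using SimpleGraph.dist_le (SimpleGraph.Walk.cons hab SimpleGraph.Walk.nil)
  have h4 := dist_ne_of_adj hG hab v
  have h5 : G.dist a b = G.dist b a := SimpleGraph.dist_comm ..
  omega

lemma parent_unique {a a' b v : V} (h1 : G.Adj a b) (h2 : G.Adj a' b)
    (ha : G.dist v a + 1 = G.dist v b) (ha' : G.dist v a' + 1 = G.dist v b) : a = a' := by
  obtain ⟨p, hp, hplen⟩ := hG.isConnected.exists_path_of_dist v a
  obtain ⟨p', hp', hp'len⟩ := hG.isConnected.exists_path_of_dist v a'
  have hbp : b ∉ p.support := by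
    intro hb
    have := geo_split hplen hb
    omega
  have hbp' : b ∉ p'.support := by
    intro hb
    have := geo_split hp'len hb
    omega
  have hq : (p.concat h1).IsPath := by
    rw [← SimpleGraph.Walk.isPath_reverse_iff, SimpleGraph.Walk.reverse_concat]
    exact hp.reverse.cons (by simpa using hbp)
  have hq' : (p'.concat h2).IsPath := by
    rw [← SimpleGraph.Walk.isPath_reverse_iff, SimpleGraph.Walk.reverse_concat]
    exact hp'.reverse.cons (by simpa using hbp')
  have heq := walk_eq_of_isPath hG hq hq'
  have := congrArg (fun w => (SimpleGraph.Walk.reverse w).getVert 1) heq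
  simpa [SimpleGraph.Walk.reverse_concat, SimpleGraph.Walk.getVert_cons_succ,
    SimpleGraph.Walk.getVert_zero] using this

lemma no_parallel {a a' b b' : V} (h1 : G.Adj a a') (h2 : G.Adj b b')
    (hne : s(a, a') ≠ s(b, b'))
    (e1 : G.dist a' b' = G.dist a b) (e2 : G.dist a b' = G.dist a b + 1)
    (e3 : G.dist a' b = G.dist a b + 1) : False := by
  have hm1 : G.dist a b ≠ 0 := by
    intro h0
    have hab : a = b := (hG.isConnected.preconnected a b).dist_eq_zero_iff.mp h0
    have hab' : a' = b' := (hG.isConnected.preconnected a' b').dist_eq_zero_iff.mp (by omega)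
    exact hne (by rw [hab, hab'])
  obtain ⟨p, hp, hplen⟩ := hG.isConnected.exists_path_of_dist a b
  obtain ⟨q, hq, hqlen⟩ := hG.isConnected.exists_path_of_dist a' b'
  have hb'p : b' ∉ p.support := by
    intro hb
    have := geo_split hplen hb
    omega
  have haq : a ∉ q.support := by
    intro hb
    have := geo_split hqlen hb
    omega
  have hq1 : (p.concat h2).IsPath := by
    rw [← SimpleGraph.Walk.isPath_reverse_iff, SimpleGraph.Walk.reverse_concat]
    exact hp.reverse.cons (by simpa using hb'p)
  have hq2 : (SimpleGraph.Walk.cons h1 q).IsPath := hq.cons haq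
  have heq := walk_eq_of_isPath hG hq1 hq2
  -- b is in the support of the first but not the second
  have hbmem : b ∈ (p.concat h2).support := by
    rw [SimpleGraph.Walk.support_concat]
    exact List.mem_append_left _ p.end_mem_support
  rw [heq] at hbmem
  rw [SimpleGraph.Walk.support_cons] at hbmem
  rcases List.mem_cons.mp hbmem with h | h
  · subst h
    simp at hm1
  · have := geo_split hqlen h
    omega

end TreeAux

section SubAux

variable {V : Type} {G : SimpleGraph V}

lemma fsd_adj_inl_inr {v : V} {e : G.edgeSet} :
    (firstSubdivision G).Adj (inl v) (inr e) ↔ v ∈ (e : Sym2 V) := by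
  simp [firstSubdivision, SimpleGraph.fromRel_adj]

lemma fsd_adj_inr_inl {v : V} {e : G.edgeSet} :
    (firstSubdivision G).Adj (inr e) (inl v) ↔ v ∈ (e : Sym2 V) := by
  simp [firstSubdivision, SimpleGraph.fromRel_adj]

lemma fsd_not_adj_inl_inl {u v : V} : ¬ (firstSubdivision G).Adj (inl u) (inl v) := by
  simp [firstSubdivision, SimpleGraph.fromRel_adj]

lemma fsd_not_adj_inr_inr {e f : G.edgeSet} : ¬ (firstSubdivision G).Adj (inr e) (inr f) := by
  simp [firstSubdivision, SimpleGraph.fromRel_adj]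

lemma adj_of_mem_edge {E : Sym2 V} (hE : E ∈ G.edgeSet) {u c : V}
    (hu : u ∈ E) (hc : c ∈ E) (hne : u ≠ c) : G.Adj u c := by
  induction E using Sym2.inductionOn with
  | hf x y =>
    rw [SimpleGraph.mem_edgeSet] at hE
    rcases Sym2.mem_iff.mp hu with rfl | rfl <;>
        rcases Sym2.mem_iff.mp hc with rfl | rfl
    · exact absurd rfl hne
    · exact hE
    · exact hE.symm
    · exact absurd rfl hne

lemma fsd_lift_walk {u v : V} (p : G.Walk u v) :
    ∃ q : (firstSubdivision G).Walk (inl u) (inl v), q.length = 2 * p.length := by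
  induction p with
  | nil => exact ⟨SimpleGraph.Walk.nil, rfl⟩
  | @cons u w v h p ih =>
    obtain ⟨q, hq⟩ := ih
    refine ⟨SimpleGraph.Walk.cons (v := inr ⟨s(u, w), (SimpleGraph.mem_edgeSet G).mpr h⟩)
      (fsd_adj_inl_inr.mpr ?_) (SimpleGraph.Walk.cons (fsd_adj_inr_inl.mpr ?_) q), ?_⟩
    · exact Sym2.mem_mk_left u w
    · exact Sym2.mem_mk_right u w
    · simp [hq]; ring

variable (hG : G.IsTree)
include hG

lemma fsd_walk_lower : ∀ (n : ℕ) {u v : V}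
    (p : (firstSubdivision G).Walk (inl u) (inl v)), p.length = n → 2 * G.dist u v ≤ n := by
  intro n
  induction n using Nat.strong_induction_on with
  | _ n ih =>
    intro u v p hl
    cases p with
    | nil =>
      rw [SimpleGraph.dist_self]
      omega
    | @cons _ y _ h q =>
      rcases y with w | e
      · exact absurd h fsd_not_adj_inl_inl
      · cases q with
        | @cons _ z _ h' r =>
          rcases z with c | f
          · have hu : u ∈ (e : Sym2 V) := fsd_adj_inl_inr.mp h
            have hc : c ∈ (e : Sym2 V) := fsd_adj_inr_inl.mp h'
            simp only [SimpleGraph.Walk.length_cons] at hl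
            have hr : 2 * G.dist c v ≤ r.length := ih r.length (by omega) r rfl
            have huc : G.dist u v ≤ 1 + G.dist c v := by
              by_cases hne : u = c
              · subst hne; omega
              · have hadj := adj_of_mem_edge e.prop hu hc hne
                have h1 : G.dist u v ≤ G.dist u c + G.dist c v :=
                  hG.isConnected.dist_triangle
                have h2 : G.dist u c ≤ 1 := by
                  simpa using SimpleGraph.dist_le
                    (SimpleGraph.Walk.cons hadj SimpleGraph.Walk.nil)
                omega
            omega
          · exact absurd h' fsd_not_adj_inr_inr

lemma fsd_dist_inl_inl (u v : V) :
    (firstSubdivision G).dist (inl u) (inl v) = 2 * G.dist u v := by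
  obtain ⟨p, _, hplen⟩ := hG.isConnected.exists_path_of_dist u v
  obtain ⟨q, hq⟩ := fsd_lift_walk p
  have hle : (firstSubdivision G).dist (inl u) (inl v) ≤ 2 * G.dist u v := by
    have := SimpleGraph.dist_le q
    omega
  have hreach : (firstSubdivision G).Reachable (inl u) (inl v) := ⟨q⟩
  obtain ⟨r, hr⟩ := hreach.exists_walk_length_eq_dist
  have := fsd_walk_lower hG r.length r rfl
  omega

end SubAux

section SubAux2

variable {V : Type} {G : SimpleGraph V}

lemma edge_rep (e : G.edgeSet) : ∃ a b, G.Adj a b ∧ (e : Sym2 V) = s(a, b) := by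
  obtain ⟨E, hE⟩ := e
  induction E using Sym2.inductionOn with
  | hf x y => exact ⟨x, y, (SimpleGraph.mem_edgeSet G).mp hE, rfl⟩

noncomputable def chi (G : SimpleGraph V) (e f : Sym2 V) : ℕ :=
  Sym2.lift ⟨fun a a' => dSum G a f + dSum G a' f, fun _ _ => add_comm _ _⟩ e

@[simp] lemma chi_mk (a a' : V) (f : Sym2 V) :
    chi G s(a, a') f = dSum G a f + dSum G a' f := rfl

lemma dist_adj_eq_one (hG : G.IsTree) {a b : V} (hab : G.Adj a b) : G.dist a b = 1 := by
  have h1 : G.dist a b ≤ 1 := by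
    simpa using SimpleGraph.dist_le (SimpleGraph.Walk.cons hab SimpleGraph.Walk.nil)
  have h2 : G.dist a b ≠ 0 := fun h0 => hab.ne (hab.reachable.dist_eq_zero_iff.mp h0)
  omega

lemma chi_self (hG : G.IsTree) (e : G.edgeSet) : chi G e.val e.val = 2 := by
  obtain ⟨a, b, hab, hval⟩ := edge_rep e
  rw [hval, chi_mk, dSum_mk, dSum_mk, SimpleGraph.dist_self, SimpleGraph.dist_self,
    dist_adj_eq_one hG hab, SimpleGraph.dist_comm, dist_adj_eq_one hG hab]

variable (hG : G.IsTree)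
include hG

lemma fsd_reachable_inl_inr (u : V) (e : G.edgeSet) :
    (firstSubdivision G).Reachable (inl u) (inr e) := by
  obtain ⟨a, b, hab, hval⟩ := edge_rep e
  obtain ⟨p, _, _⟩ := hG.isConnected.exists_path_of_dist u a
  obtain ⟨q, _⟩ := fsd_lift_walk p
  exact ⟨q.concat (fsd_adj_inl_inr.mpr (by rw [hval]; exact Sym2.mem_mk_left a b))⟩

lemma fsd_peel_inl {e : G.edgeSet} {u : V}
    (q : (firstSubdivision G).Walk (inr e) (inl u)) :
    ∃ c, c ∈ (e : Sym2 V) ∧ 2 * G.dist u c + 1 ≤ q.length := by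
  cases q with
  | @cons _ z _ h r =>
    rcases z with c | f
    · refine ⟨c, fsd_adj_inr_inl.mp h, ?_⟩
      have := fsd_walk_lower hG r.length r rfl
      rw [SimpleGraph.Walk.length_cons]
      rw [SimpleGraph.dist_comm]
      omega
    · exact absurd h fsd_not_adj_inr_inr

lemma fsd_dist_inl_inr_aux {u a b : V} (hab : G.Adj a b)
    (hd : G.dist u b = G.dist u a + 1) (e : G.edgeSet) (hval : (e : Sym2 V) = s(a, b)) :
    (firstSubdivision G).dist (inl u) (inr e) = 2 * G.dist u a + 1 := by
  obtain ⟨p, _, hplen⟩ := hG.isConnected.exists_path_of_dist u a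
  obtain ⟨q, hq⟩ := fsd_lift_walk p
  have ha : a ∈ (e : Sym2 V) := by rw [hval]; exact Sym2.mem_mk_left a b
  have hle : (firstSubdivision G).dist (inl u) (inr e) ≤ 2 * G.dist u a + 1 := by
    have := SimpleGraph.dist_le (q.concat (fsd_adj_inl_inr.mpr ha))
    rw [SimpleGraph.Walk.length_concat] at this
    omega
  obtain ⟨w, hw⟩ := (fsd_reachable_inl_inr hG u e).exists_walk_length_eq_dist
  obtain ⟨c, hc, hcle⟩ := fsd_peel_inl hG w.reverse
  rw [SimpleGraph.Walk.length_reverse, hw] at hcle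
  have hca : G.dist u a ≤ G.dist u c := by
    rw [hval] at hc
    rcases Sym2.mem_iff.mp hc with rfl | rfl <;> omega
  omega

lemma fsd_dist_inl_inr (u : V) (e : G.edgeSet) :
    (firstSubdivision G).dist (inl u) (inr e) = dSum G u e.val := by
  obtain ⟨a, b, hab, hval⟩ := edge_rep e
  rcases dist_adj_cases hG hab u with hd | hd
  · rw [fsd_dist_inl_inr_aux hG hab hd e hval, hval, dSum_mk]
    omega
  · rw [fsd_dist_inl_inr_aux hG hab.symm hd e (by rw [hval, Sym2.eq_swap]), hval, dSum_mk]
    omega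

lemma dSum_diff_two {a a' b b' : V} (haa : G.Adj a a') (hbb : G.Adj b b')
    (hne : s(a, a') ≠ s(b, b')) :
    dSum G a s(b, b') + 2 = dSum G a' s(b, b') ∨
      dSum G a' s(b, b') + 2 = dSum G a s(b, b') := by
  have hA := dist_adj_cases hG hbb a
  have hB := dist_adj_cases hG hbb a'
  have hC := dist_adj_cases hG haa b
  have hD := dist_adj_cases hG haa b'
  have hc1 : G.dist b a = G.dist a b := SimpleGraph.dist_comm ..
  have hc2 : G.dist b a' = G.dist a' b := SimpleGraph.dist_comm ..
  have hc3 : G.dist b' a = G.dist a b' := SimpleGraph.dist_comm ..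
  have hc4 : G.dist b' a' = G.dist a' b' := SimpleGraph.dist_comm ..
  rw [dSum_mk, dSum_mk]
  have hne' : s(a, a') ≠ s(b', b) := fun h => hne (h.trans (Sym2.eq_swap))
  rcases hA with hA | hA <;> rcases hB with hB | hB <;>
    rcases hC with hC | hC <;> rcases hD with hD | hD <;>
      first
        | omega
        | exact (no_parallel hG haa hbb hne (by omega) (by omega) (by omega)).elim
        | exact (no_parallel hG haa hbb.symm hne' (by omega) (by omega) (by omega)).elim

lemma fsd_dist_inr_inr {e f : G.edgeSet} (hne : e ≠ f) :
    2 * (firstSubdivision G).dist (inr e) (inr f) = chi G e.val f.val := by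
  obtain ⟨a, a', haa, hval⟩ := edge_rep e
  obtain ⟨b, b', hbb, hfval⟩ := edge_rep f
  have hX := fsd_dist_inl_inr hG a f
  have hY := fsd_dist_inl_inr hG a' f
  have hnev : s(a, a') ≠ s(b, b') := by
    rw [← hval, ← hfval]
    exact fun h => hne (Subtype.ext h)
  -- upper bounds
  have huba : (firstSubdivision G).dist (inr e) (inr f) ≤ dSum G a f.val + 1 := by
    obtain ⟨w, hw⟩ := (fsd_reachable_inl_inr hG a f).exists_walk_length_eq_dist
    have hadj : (firstSubdivision G).Adj (inr e) (inl a) :=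
      fsd_adj_inr_inl.mpr (by rw [hval]; exact Sym2.mem_mk_left a a')
    have := SimpleGraph.dist_le (SimpleGraph.Walk.cons hadj w)
    rw [SimpleGraph.Walk.length_cons, hw, hX] at this
    omega
  have huba' : (firstSubdivision G).dist (inr e) (inr f) ≤ dSum G a' f.val + 1 := by
    obtain ⟨w, hw⟩ := (fsd_reachable_inl_inr hG a' f).exists_walk_length_eq_dist
    have hadj : (firstSubdivision G).Adj (inr e) (inl a') :=
      fsd_adj_inr_inl.mpr (by rw [hval]; exact Sym2.mem_mk_right a a')
    have := SimpleGraph.dist_le (SimpleGraph.Walk.cons hadj w)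
    rw [SimpleGraph.Walk.length_cons, hw, hY] at this
    omega
  -- lower bound
  have hreach : (firstSubdivision G).Reachable (inr e) (inr f) := by
    have hadj : (firstSubdivision G).Adj (inr e) (inl a) :=
      fsd_adj_inr_inl.mpr (by rw [hval]; exact Sym2.mem_mk_left a a')
    exact (SimpleGraph.Adj.reachable hadj).trans (fsd_reachable_inl_inr hG a f)
  obtain ⟨w, hw⟩ := hreach.exists_walk_length_eq_dist
  have hlow : ∃ c, c ∈ (e : Sym2 V) ∧
      (firstSubdivision G).dist (inl c) (inr f) + 1 ≤ w.length := by
    cases w with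
    | nil => exact absurd rfl hne
    | @cons _ z _ h r =>
      rcases z with c | g
      · exact ⟨c, fsd_adj_inr_inl.mp h, by
          rw [SimpleGraph.Walk.length_cons]
          have := SimpleGraph.dist_le r
          omega⟩
      · exact absurd h fsd_not_adj_inr_inr
  obtain ⟨c, hc, hcle⟩ := hlow
  rw [hw] at hcle
  have hdiff := dSum_diff_two hG haa hbb hnev
  rw [← hfval] at hdiff
  have hcval : (firstSubdivision G).dist (inl c) (inr f) = dSum G c f.val :=
    fsd_dist_inl_inr hG c f
  rw [hcval] at hcle
  have hcc : dSum G c f.val = dSum G a f.val ∨ dSum G c f.val = dSum G a' f.val := by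
    rw [hval] at hc
    rcases Sym2.mem_iff.mp hc with rfl | rfl
    · exact Or.inl rfl
    · exact Or.inr rfl
  rw [hval, chi_mk]
  omega

end SubAux2

section SumAux

variable {V : Type} {G : SimpleGraph V}

lemma even_double_sum {α : Type} (s : Finset α) (f : α → α → ℕ)
    (hsym : ∀ a b, f a b = f b a) (hdiag : ∀ a, f a a = 0) :
    ∃ k, ∑ a ∈ s, ∑ b ∈ s, f a b = 2 * k := by
  classical
  induction s using Finset.induction_on with
  | empty => exact ⟨0, by simp⟩
  | @insert a s ha ih =>
    obtain ⟨k, hk⟩ := ih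
    refine ⟨(∑ b ∈ s, f a b) + k, ?_⟩
    rw [Finset.sum_insert ha]
    have h1 : ∑ b ∈ insert a s, f a b = ∑ b ∈ s, f a b := by
      rw [Finset.sum_insert ha, hdiag, zero_add]
    have h2 : ∑ x ∈ s, ∑ b ∈ insert a s, f x b
        = (∑ x ∈ s, f x a) + ∑ x ∈ s, ∑ b ∈ s, f x b := by
      rw [← Finset.sum_add_distrib]
      exact Finset.sum_congr rfl fun x _ => Finset.sum_insert ha
    have h3 : ∑ x ∈ s, f x a = ∑ x ∈ s, f a x :=
      Finset.sum_congr rfl fun x _ => hsym x a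
    omega

lemma sum_dSum_eq [Fintype V] [Fintype G.edgeSet] (hG : G.IsTree) (v : V) :
    (∑ e : G.edgeSet, dSum G v e.val) + Fintype.card G.edgeSet
      = 2 * ∑ u : V, G.dist v u := by
  classical
  have spec : ∀ e : G.edgeSet, ∃ u w, (e : Sym2 V) = s(w, u) ∧
      G.dist v w + 1 = G.dist v u ∧ dSum G v e.val + 1 = 2 * G.dist v u := by
    intro e
    obtain ⟨a, b, hab, hval⟩ := edge_rep e
    rcases dist_adj_cases hG hab v with hd | hd
    · exact ⟨b, a, hval, by omega, by rw [hval, dSum_mk]; omega⟩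
    · exact ⟨a, b, hval.trans (Sym2.eq_swap), by omega, by rw [hval, dSum_mk]; omega⟩
  choose F W hval hstep hsum using spec
  have hadj : ∀ e : G.edgeSet, G.Adj (W e) (F e) := fun e =>
    (SimpleGraph.mem_edgeSet G).mp (by rw [← hval e]; exact e.prop)
  have hcard : Fintype.card G.edgeSet + 1 = Fintype.card V := by
    rw [← SimpleGraph.edgeFinset_card]
    exact hG.card_edgeFinset
  have hFne : ∀ e : G.edgeSet, F e ∈ (Finset.univ : Finset V).erase v := by
    intro e
    refine Finset.mem_erase.mpr ⟨fun h => ?_, Finset.mem_univ _⟩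
    have := hstep e
    rw [h, SimpleGraph.dist_self] at this
    omega
  have hinj : ∀ (e₁ : G.edgeSet), e₁ ∈ Finset.univ → ∀ (e₂ : G.edgeSet),
      e₂ ∈ Finset.univ → F e₁ = F e₂ → e₁ = e₂ := by
    intro e₁ _ e₂ _ h
    have hW : W e₁ = W e₂ := by
      refine parent_unique hG (hadj e₁) (h ▸ hadj e₂) (hstep e₁) ?_
      rw [h]; exact hstep e₂
    apply Subtype.ext
    rw [hval e₁, hval e₂, hW, h]
  have hbij : ∑ e : G.edgeSet, G.dist v (F e)
      = ∑ u ∈ (Finset.univ : Finset V).erase v, G.dist v u := by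
    refine Finset.sum_bij (fun e _ => F e) (fun e _ => hFne e)
      (fun e₁ h₁ e₂ h₂ h => hinj e₁ h₁ e₂ h₂ h) ?_ (fun e _ => rfl)
    intro b hb
    have hcle : ((Finset.univ : Finset V).erase v).card
        ≤ (Finset.univ : Finset G.edgeSet).card := by
      rw [Finset.card_erase_of_mem (Finset.mem_univ v), Finset.card_univ, Finset.card_univ]
      omega
    obtain ⟨a, ha, hba⟩ := Finset.surj_on_of_inj_on_of_card_le
      (fun (e : G.edgeSet) (_ : e ∈ Finset.univ) => F e) (fun e _ => hFne e)
      (fun e₁ e₂ h₁ h₂ h => hinj e₁ h₁ e₂ h₂ h) hcle b hb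
    exact ⟨a, ha, hba.symm⟩
  have hsum2 : (∑ e : G.edgeSet, dSum G v e.val) + Fintype.card G.edgeSet
      = 2 * ∑ e : G.edgeSet, G.dist v (F e) := by
    have := Finset.sum_congr rfl (fun (e : G.edgeSet) (_ : e ∈ Finset.univ) => hsum e)
    rw [Finset.sum_add_distrib, Finset.sum_const, Finset.card_univ, smul_eq_mul,
      mul_one, ← Finset.mul_sum] at this
    exact this
  have hfull : ∑ u ∈ (Finset.univ : Finset V).erase v, G.dist v u = ∑ u : V, G.dist v u := by
    rw [← Finset.sum_erase_add (Finset.univ : Finset V) _ (Finset.mem_univ v),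
      SimpleGraph.dist_self, add_zero]
  rw [hsum2, hbij, hfull]

end SumAux

/-- For a tree `T` on `n` vertices with Wiener index `S`, the Wiener index of its
first-order subdivision equals `8S - 2n(n-1)`. -/
theorem wiener_firstSubdivision {V : Type} [Fintype V] (G : SimpleGraph V)
    [Fintype G.edgeSet] (hG : G.IsTree) :
    (wienerIndex (firstSubdivision G) : ℤ) =
      8 * (wienerIndex G : ℤ) -
        2 * (Fintype.card V : ℤ) * ((Fintype.card V : ℤ) - 1) := by
  classical
  set H := firstSubdivision G with hHdef
  set n := Fintype.card V with hndef
  set m := Fintype.card G.edgeSet with hmdef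
  set Dtot := ∑ u : V, ∑ v : V, G.dist u v with hDtotdef
  set Stot := ∑ x : V ⊕ G.edgeSet, ∑ y : V ⊕ G.edgeSet, H.dist x y with hStotdef
  set B := ∑ v : V, ∑ e : G.edgeSet, dSum G v e.val with hBdef
  set C := ∑ e : G.edgeSet, ∑ f : G.edgeSet, H.dist (inr e) (inr f) with hCdef
  have hm : m + 1 = n := by
    rw [hmdef, hndef, ← SimpleGraph.edgeFinset_card]
    exact hG.card_edgeFinset
  -- splitting the big sum
  have h1 : ∀ u : V, (∑ y : V ⊕ G.edgeSet, H.dist (inl u) y)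
      = 2 * (∑ v : V, G.dist u v) + ∑ e : G.edgeSet, dSum G u e.val := by
    intro u
    rw [Fintype.sum_sum_type, Finset.mul_sum]
    congr 1
    · exact Finset.sum_congr rfl fun v _ => fsd_dist_inl_inl hG u v
    · exact Finset.sum_congr rfl fun e _ => fsd_dist_inl_inr hG u e
  have h2 : ∀ e : G.edgeSet, (∑ y : V ⊕ G.edgeSet, H.dist (inr e) y)
      = (∑ v : V, dSum G v e.val) + ∑ f : G.edgeSet, H.dist (inr e) (inr f) := by
    intro e
    rw [Fintype.sum_sum_type]
    congr 1
    refine Finset.sum_congr rfl fun v _ => ?_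
    rw [SimpleGraph.dist_comm]
    exact fsd_dist_inl_inr hG v e
  have hsplit : Stot = 2 * Dtot + B + B + C := by
    have e0 : Stot = (∑ u : V, ∑ y : V ⊕ G.edgeSet, H.dist (inl u) y)
        + ∑ e : G.edgeSet, ∑ y : V ⊕ G.edgeSet, H.dist (inr e) y :=
      Fintype.sum_sum_type _
    have e1 : ∑ u : V, ∑ y : V ⊕ G.edgeSet, H.dist (inl u) y = 2 * Dtot + B := by
      rw [Finset.sum_congr rfl fun u _ => h1 u, Finset.sum_add_distrib, ← Finset.mul_sum]
    have e2 : ∑ e : G.edgeSet, ∑ y : V ⊕ G.edgeSet, H.dist (inr e) y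
        = (∑ e : G.edgeSet, ∑ v : V, dSum G v e.val) + C := by
      rw [Finset.sum_congr rfl fun e _ => h2 e, Finset.sum_add_distrib]
    have e3 : ∑ e : G.edgeSet, ∑ v : V, dSum G v e.val = B := Finset.sum_comm
    rw [e0, e1, e2, e3]
    ring
  have hBid : B + n * m = 2 * Dtot := by
    have := Finset.sum_congr rfl (fun (v : V) (_ : v ∈ Finset.univ) => sum_dSum_eq hG v)
    rw [Finset.sum_add_distrib, Finset.sum_const, Finset.card_univ, smul_eq_mul,
      ← Finset.mul_sum] at this
    rw [hBdef, hndef, hmdef, hDtotdef]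
    exact this
  -- the inr-inr block
  have ha : ∀ e : G.edgeSet, ∑ f : G.edgeSet, chi G e.val f.val
      = (∑ f : G.edgeSet, 2 * H.dist (inr e) (inr f)) + 2 := by
    intro e
    rw [← Finset.sum_erase_add Finset.univ _ (Finset.mem_univ e),
      ← Finset.sum_erase_add Finset.univ
        (fun f => 2 * H.dist (inr e) (inr f)) (Finset.mem_univ e)]
    rw [SimpleGraph.dist_self, mul_zero, add_zero, chi_self hG e]
    congr 1
    refine Finset.sum_congr rfl fun f hf => ?_
    exact (fsd_dist_inr_inr hG (Ne.symm (Finset.mem_erase.mp hf).1)).symm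
  have hbchi : ∀ e : G.edgeSet, (∑ f : G.edgeSet, chi G e.val f.val) + 2 * m
      = 2 * ∑ v : V, dSum G v e.val := by
    intro e
    obtain ⟨a, a', haa, hval⟩ := edge_rep e
    have hpt : ∀ f : G.edgeSet, chi G e.val f.val = dSum G a f.val + dSum G a' f.val :=
      fun f => by rw [hval, chi_mk]
    rw [Finset.sum_congr rfl fun f _ => hpt f, Finset.sum_add_distrib]
    have hIa := sum_dSum_eq hG a
    have hIa' := sum_dSum_eq hG a'
    have hR : ∑ v : V, dSum G v e.val = (∑ u : V, G.dist a u) + ∑ u : V, G.dist a' u := by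
      rw [← Finset.sum_add_distrib]
      refine Finset.sum_congr rfl fun v _ => ?_
      rw [hval, dSum_mk]
      have c1 : G.dist v a = G.dist a v := SimpleGraph.dist_comm ..
      have c2 : G.dist v a' = G.dist a' v := SimpleGraph.dist_comm ..
      omega
    rw [hR]
    rw [hmdef] at *
    omega
  have hCid : 2 * C + 2 * m + 2 * (m * m) = 2 * B := by
    have hinner : ∑ e : G.edgeSet, ∑ f : G.edgeSet, 2 * H.dist (inr e) (inr f)
        = 2 * C := by
      rw [hCdef, Finset.mul_sum]
      exact Finset.sum_congr rfl fun e _ => (Finset.mul_sum _ _ _).symm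
    have hsa : ∑ e : G.edgeSet, ∑ f : G.edgeSet, chi G e.val f.val = 2 * C + 2 * m := by
      rw [Finset.sum_congr rfl fun e _ => ha e, Finset.sum_add_distrib, Finset.sum_const,
        Finset.card_univ, smul_eq_mul, hinner, ← hmdef]
      ring
    have hsb : (∑ e : G.edgeSet, ∑ f : G.edgeSet, chi G e.val f.val) + 2 * (m * m)
        = 2 * ∑ e : G.edgeSet, ∑ v : V, dSum G v e.val := by
      have h := Finset.sum_congr rfl
        (fun (e : G.edgeSet) (_ : e ∈ Finset.univ) => hbchi e)
      rw [Finset.sum_add_distrib, Finset.sum_const, Finset.card_univ, smul_eq_mul,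
        ← Finset.mul_sum, ← hmdef, show m * (2 * m) = 2 * (m * m) by ring] at h
      exact h
    have hcomm : ∑ e : G.edgeSet, ∑ v : V, dSum G v e.val = B := Finset.sum_comm
    rw [hcomm] at hsb
    omega
  -- evenness
  obtain ⟨S2, hS2⟩ := even_double_sum (Finset.univ : Finset (V ⊕ G.edgeSet))
    (fun x y => H.dist x y) (fun a b => SimpleGraph.dist_comm ..)
    (fun a => SimpleGraph.dist_self ..)
  obtain ⟨D2, hD2⟩ := even_double_sum (Finset.univ : Finset V)
    (fun u v => G.dist u v) (fun a b => SimpleGraph.dist_comm ..)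
    (fun a => SimpleGraph.dist_self ..)
  have hS2' : Stot = 2 * S2 := hS2
  have hD2' : Dtot = 2 * D2 := hD2
  have hwH : wienerIndex H = S2 := by
    show Stot / 2 = S2
    omega
  have hwG : wienerIndex G = D2 := by
    show Dtot / 2 = D2
    omega
  rw [hwH, hwG]
  -- integer arithmetic
  have z1 : (Stot : ℤ) = 2 * Dtot + B + B + C := by exact_mod_cast hsplit
  have z2 : (B : ℤ) + (n : ℤ) * m = 2 * Dtot := by exact_mod_cast hBid
  have z3 : 2 * (C : ℤ) + 2 * m + 2 * ((m : ℤ) * m) = 2 * B := by exact_mod_cast hCid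
  have z4 : (m : ℤ) + 1 = n := by exact_mod_cast hm
  have z5 : (Stot : ℤ) = 2 * S2 := by exact_mod_cast hS2'
  have z6 : (Dtot : ℤ) = 2 * D2 := by exact_mod_cast hD2'
  have key2 : (4 : ℤ) * S2 = 32 * D2 - 8 * (n : ℤ) * ((n : ℤ) - 1) := by
    linear_combination (2 : ℤ) * z1 + z3 + 6 * z2 + 16 * z6 - 2 * z5
      - (2 * (m : ℤ) + 8 * (n : ℤ)) * z4
  linarith [key2]
end

section
/- Let T be a tree on n vertices with geodesic distance (Wiener index) S. In the first-order subdivision of T, the sum of graph distances over all pairs consisting of one original vertex (a vertex of T) and one new edge-vertex equals 4S − n(n−1). -/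
set_option linter.unusedSectionVars false

open SimpleGraph

variable {V : Type} {G : SimpleGraph V}

lemma sub_adj {v : V} {e : G.edgeSet} :
    (firstSubdivision G).Adj (Sum.inl v) (Sum.inr e) ↔ v ∈ (e : Sym2 V) := by
  simp [firstSubdivision, SimpleGraph.fromRel_adj]

lemma sub_adj_cases {x y : V ⊕ G.edgeSet} (h : (firstSubdivision G).Adj x y) :
    (∃ v e, x = Sum.inl v ∧ y = Sum.inr e ∧ v ∈ (e : Sym2 V)) ∨
    (∃ v e, y = Sum.inl v ∧ x = Sum.inr e ∧ v ∈ (e : Sym2 V)) := by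
  rw [firstSubdivision, SimpleGraph.fromRel_adj] at h
  obtain ⟨-, h | h⟩ := h
  · rcases x with v | e <;> rcases y with v' | e' <;> simp_all
  · rcases x with v | e <;> rcases y with v' | e' <;> simp_all

def liftWalk : {u w : V} → G.Walk u w → (firstSubdivision G).Walk (Sum.inl u) (Sum.inl w)
  | _, _, .nil => .nil
  | u, w, .cons (v := x) h p =>
      .cons (sub_adj.mpr (by simp : u ∈ (⟨s(u,x), h⟩ : G.edgeSet).val))
        (.cons ((firstSubdivision G).adj_symm
          (sub_adj.mpr (by simp : x ∈ (⟨s(u,x), h⟩ : G.edgeSet).val))) (liftWalk p))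

lemma liftWalk_length : ∀ {u w : V} (p : G.Walk u w), (liftWalk p).length = 2 * p.length
  | _, _, .nil => rfl
  | _, _, .cons h p => by simp [liftWalk, liftWalk_length p]; omega

lemma potential_le_length {W : Type} {H : SimpleGraph W} (f : W → ℕ)
    (hf : ∀ x y, H.Adj x y → f x ≤ f y + 1) :
    ∀ {x t : W} (p : H.Walk x t), f t = 0 → f x ≤ p.length := by
  intro x t p
  induction p with
  | nil => intro h; simp [h]
  | cons h q ih =>
    intro ht
    have h1 := hf _ _ h
    have h2 := ih ht
    simp only [SimpleGraph.Walk.length_cons]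
    omega

section Tree
variable [DecidableEq V]


lemma tree_path_len (hG : G.IsTree) {u w : V} (p : G.Walk u w) (hp : p.IsPath) :
    p.length = G.dist u w := by
  obtain ⟨q, hq, hql⟩ := hG.isConnected.exists_path_of_dist u w
  have := hG.IsAcyclic.path_unique ⟨p, hp⟩ ⟨q, hq⟩
  rw [Subtype.ext_iff] at this
  simp only at this
  rw [this, hql]


lemma adj_dist_cases (hG : G.IsTree) {a b : V} (hab : G.Adj a b) (v : V) :
    G.dist v b = G.dist v a + 1 ∨ G.dist v a = G.dist v b + 1 := by
  obtain ⟨p, hp, hpl⟩ := hG.isConnected.exists_path_of_dist v a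
  by_cases hb : b ∈ p.support
  · right
    have h1 : (p.takeUntil b hb).length = G.dist v b := tree_path_len hG _ (hp.takeUntil hb)
    have h2 : (p.dropUntil b hb).length = G.dist b a := tree_path_len hG _ (hp.dropUntil hb)
    have h3 := congr_arg SimpleGraph.Walk.length (p.take_spec hb)
    rw [SimpleGraph.Walk.length_append] at h3
    have h4 : G.dist b a = 1 := by rw [SimpleGraph.dist_eq_one_iff_adj]; exact hab.symm
    omega
  · left
    have hp' : (p.concat hab).IsPath := by
      rw [SimpleGraph.Walk.isPath_def] at hp ⊢
      rw [SimpleGraph.Walk.support_concat, List.nodup_append']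
      exact ⟨hp, List.nodup_singleton b, by simpa using hb⟩
    have := tree_path_len hG _ hp'
    rw [SimpleGraph.Walk.length_concat, hpl] at this
    omega

-- shortest path from v to u, extended by adjacency to far vertex, is a path
lemma concat_shortest_isPath (hG : G.IsTree) {v u w : V}
    (hvw : G.Adj w u) (hd : G.dist v u = G.dist v w + 1) {q : G.Walk v w}
    (hq : q.IsPath) (hql : q.length = G.dist v w) : (q.concat hvw).IsPath := by
  have hu : u ∉ q.support := by
    intro hmem
    have h1 : (q.takeUntil u hmem).length = G.dist v u :=
      tree_path_len hG _ (hq.takeUntil hmem)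
    have h2 := q.length_takeUntil_le hmem
    omega
  rw [Walk.isPath_def] at hq ⊢
  rw [Walk.support_concat, List.nodup_append']
  exact ⟨hq, List.nodup_singleton u, by simpa using hu⟩

lemma parent_existsUnique (hG : G.IsTree) {v u : V} (hu : u ≠ v) :
    ∃! w : V, G.Adj u w ∧ G.dist v u = G.dist v w + 1 := by
  obtain ⟨p, hp, hpl⟩ := hG.isConnected.exists_path_of_dist u v
  have hnil : ¬ p.Nil := by
    intro h; exact hu h.eq
  rw [Walk.not_nil_iff] at hnil
  obtain ⟨w, h, q, rfl⟩ := hnil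
  have hq : q.length = G.dist v w := by
    rw [G.dist_comm (u := v) (v := w)]
    exact tree_path_len hG q hp.of_cons
  have hdu : G.dist v u = G.dist v w + 1 := by
    rw [G.dist_comm (u := v) (v := u), ← hpl]
    simp [hq]
  refine ⟨w, ⟨h, hdu⟩, ?_⟩
  rintro w' ⟨h', hd'⟩
  -- both give paths from v to u via concat
  obtain ⟨r, hr, hrl⟩ := hG.isConnected.exists_path_of_dist v w
  obtain ⟨r', hr', hrl'⟩ := hG.isConnected.exists_path_of_dist v w'
  have c1 := concat_shortest_isPath hG (G := G) h.symm hdu hr hrl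
  have c2 := concat_shortest_isPath hG (G := G) h'.symm hd' hr' hrl'
  have := hG.IsAcyclic.path_unique ⟨r'.concat h'.symm, c2⟩ ⟨r.concat h.symm, c1⟩
  rw [Subtype.ext_iff] at this
  simp only at this
  obtain ⟨hv, -⟩ := Walk.concat_inj this
  exact hv

end Tree

lemma subdiv_dist_oriented (hG : G.IsTree) {v a b : V} (hab : G.Adj a b)
    (hd : G.dist v b = G.dist v a + 1) :
    (firstSubdivision G).dist (Sum.inl v) (Sum.inr ⟨s(a,b), hab⟩) =
      G.dist v a + G.dist v b := by
  classical
  set e : G.edgeSet := ⟨s(a,b), hab⟩ with he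
  -- upper bound
  obtain ⟨p, hp, hpl⟩ := hG.isConnected.exists_path_of_dist v a
  have hub : (firstSubdivision G).dist (Sum.inl v) (Sum.inr e) ≤ 2 * G.dist v a + 1 := by
    have := SimpleGraph.dist_le
      ((liftWalk p).concat (sub_adj.mpr (by simp [he] : a ∈ (e : Sym2 V))))
    rwa [SimpleGraph.Walk.length_concat, liftWalk_length, hpl] at this
  -- potential function
  set g : V → ℕ := fun u => min (G.dist u a) (G.dist u b) with hg
  have glip : ∀ u w : V, G.Adj u w → g u ≤ g w + 1 := by
    intro u w huw
    have t1 := hG.isConnected.dist_triangle (u := u) (v := w) (w := a)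
    have t2 := hG.isConnected.dist_triangle (u := u) (v := w) (w := b)
    have hd1 : G.dist u w = 1 := SimpleGraph.dist_eq_one_iff_adj.mpr huw
    simp only [hg]
    omega
  set M : G.edgeSet → ℕ := fun e' =>
    Sym2.lift ⟨fun c d => min (g c) (g d), fun c d => by simp [min_comm]⟩ e'.val with hM
  set f : V ⊕ G.edgeSet → ℕ := fun x =>
    match x with
    | Sum.inl u => 2 * g u + 1
    | Sum.inr e' => if e' = e then 0 else 2 * M e' + 2
    with hf
  have flip : ∀ x y, (firstSubdivision G).Adj x y → f x ≤ f y + 1 := by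
    have key : ∀ (u : V) (e' : G.edgeSet), u ∈ (e' : Sym2 V) →
        (g u ≤ M e' + 1 ∧ M e' ≤ g u ∧ (e' = e → g u = 0)) := by
      rintro u ⟨s, hs⟩ hu
      induction s with
      | _ c w =>
        simp only [Sym2.mem_iff] at hu
        have hcw : G.Adj c w := (G.mem_edgeSet).1 hs
        have l1 := glip c w hcw
        have l2 := glip w c hcw.symm
        have hMe : M ⟨s(c,w), hs⟩ = min (g c) (g w) := by simp [hM]
        have heq : (⟨s(c,w), hs⟩ : G.edgeSet) = e → (c = a ∧ w = b) ∨ (c = b ∧ w = a) := by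
          intro h
          rw [he] at h
          have := congrArg Subtype.val h
          simpa [Sym2.eq_iff] using this
        have gza : g a = 0 := by simp [hg]
        have gzb : g b = 0 := by simp [hg]
        constructor
        · rcases hu with rfl | rfl <;> omega
        constructor
        · rcases hu with rfl | rfl <;> omega
        · intro h
          rcases heq h with ⟨rfl, rfl⟩ | ⟨rfl, rfl⟩ <;> rcases hu with rfl | rfl <;> omega
    intro x y hxy
    rcases sub_adj_cases hxy with ⟨u, e', rfl, rfl, hu⟩ | ⟨u, e', rfl, rfl, hu⟩
    · obtain ⟨k1, k2, k3⟩ := key u e' hu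
      by_cases hee : e' = e
      · subst hee
        have hgz := k3 rfl
        simp only [hf, if_pos rfl]
        omega
      · simp only [hf, if_neg hee]
        omega
    · obtain ⟨k1, k2, k3⟩ := key u e' hu
      by_cases hee : e' = e
      · subst hee; simp [hf]
      · simp only [hf, if_neg hee]
        omega
  -- lower bound
  have hreach : (firstSubdivision G).Reachable (Sum.inl v) (Sum.inr e) :=
    ⟨(liftWalk p).concat (sub_adj.mpr (by simp [he] : a ∈ (e : Sym2 V)))⟩
  obtain ⟨q, hq⟩ := hreach.exists_walk_length_eq_dist
  have hlb := potential_le_length f flip q (by simp [hf])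
  rw [hq] at hlb
  have hfv : f (Sum.inl v) = 2 * g v + 1 := rfl
  have : g v = G.dist v a := by simp only [hg]; omega
  omega

lemma subdiv_dist (hG : G.IsTree) {v a b : V} (hab : G.Adj a b) :
    (firstSubdivision G).dist (Sum.inl v) (Sum.inr ⟨s(a,b), hab⟩) =
      G.dist v a + G.dist v b := by
  classical
  rcases adj_dist_cases hG hab v with hd | hd
  · exact subdiv_dist_oriented hG hab hd
  · have h2 := subdiv_dist_oriented hG hab.symm hd
    have he : (⟨s(b,a), hab.symm⟩ : G.edgeSet) = ⟨s(a,b), hab⟩ :=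
      Subtype.ext (Sym2.eq_swap)
    rw [he] at h2
    rw [h2]
    omega

lemma sum_D (hG : G.IsTree) [Fintype V] [Fintype G.edgeSet] (v : V) :
    ∑ e : G.edgeSet,
      (Sym2.lift ⟨fun a b => G.dist v a + G.dist v b, fun a b => Nat.add_comm _ _⟩ e.val + 1)
      = 2 * ∑ u : V, G.dist v u := by
  classical
  -- choose far/near endpoints for each edge
  have hfn : ∀ e : G.edgeSet, ∃ u w : V, e.val = s(u, w) ∧ G.dist v u = G.dist v w + 1 := by
    rintro ⟨s, hs⟩
    induction s with
    | _ a b =>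
      have hab : G.Adj a b := (G.mem_edgeSet).1 hs
      rcases adj_dist_cases hG hab v with hd | hd
      · exact ⟨b, a, Sym2.eq_swap.symm, hd⟩
      · exact ⟨a, b, rfl, hd⟩
  choose far near hs hd using hfn
  have hadj : ∀ e : G.edgeSet, G.Adj (far e) (near e) := by
    intro e
    have := e.prop
    rw [hs e] at this
    exact (G.mem_edgeSet).1 this
  have hfar_ne : ∀ e : G.edgeSet, far e ≠ v := by
    intro e h
    have h2 := hd e
    rw [h] at h2
    rw [SimpleGraph.dist_self] at h2
    omega
  have key : ∑ e : G.edgeSet,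
      (Sym2.lift ⟨fun a b => G.dist v a + G.dist v b, fun a b => Nat.add_comm _ _⟩ e.val + 1)
      = ∑ u ∈ Finset.univ.erase v, 2 * G.dist v u := by
    refine Finset.sum_bij (fun e _ => far e) (fun e _ => Finset.mem_erase.2 ⟨hfar_ne e, Finset.mem_univ _⟩)
      ?_ ?_ ?_
    · -- injective
      intro e₁ h₁ e₂ h₂ heq
      have heq' : far e₁ = far e₂ := heq
      have hu := parent_existsUnique hG (hfar_ne e₁)
      have hsecond : G.Adj (far e₁) (near e₂) ∧ G.dist v (far e₁) = G.dist v (near e₂) + 1 := by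
        rw [heq']; exact ⟨hadj e₂, hd e₂⟩
      have n1 : near e₁ = near e₂ := hu.unique ⟨hadj e₁, hd e₁⟩ hsecond
      apply Subtype.ext
      rw [hs e₁, hs e₂, heq', n1]
    · -- surjective
      intro u hu
      have hune : u ≠ v := (Finset.mem_erase.1 hu).1
      obtain ⟨w, ⟨hw, hwd⟩, -⟩ := parent_existsUnique hG hune
      set e : G.edgeSet := ⟨s(u, w), (G.mem_edgeSet).2 hw⟩ with he
      refine ⟨e, Finset.mem_univ _, ?_⟩
      have h1 := hs e
      rw [Sym2.eq_iff] at h1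
      rcases h1 with ⟨h2, h3⟩ | ⟨h2, h3⟩
      · exact h2.symm
      · exfalso
        have h4 := hd e
        rw [← h2, ← h3] at h4
        omega
    · intro e _
      rw [hs e]
      simp only [Sym2.lift_mk]
      have := hd e
      omega
  have hsplit : ∑ u : V, G.dist v u = ∑ u ∈ Finset.univ.erase v, G.dist v u := by
    rw [← Finset.add_sum_erase _ _ (Finset.mem_univ v)]
    simp
  rw [key, hsplit, Finset.mul_sum]

lemma subdiv_dist' (hG : G.IsTree) (v : V) (e : G.edgeSet) :
    ((firstSubdivision G).dist (Sum.inl v) (Sum.inr e) : ℕ) =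
      Sym2.lift ⟨fun a b => G.dist v a + G.dist v b, fun a b => Nat.add_comm _ _⟩ e.val := by
  obtain ⟨s, hs⟩ := e
  induction s with
  | _ a b =>
    have hab : G.Adj a b := (G.mem_edgeSet).1 hs
    have h := subdiv_dist hG (v := v) hab
    simpa using h

lemma total_even [Fintype V] (G : SimpleGraph V) :
    2 ∣ ∑ u : V, ∑ w : V, G.dist u w := by
  classical
  rw [← ZMod.natCast_eq_zero_iff]
  push_cast
  have : ∑ u : V, ∑ w : V, (G.dist u w : ZMod 2) =
      ∑ p : V × V, (G.dist p.1 p.2 : ZMod 2) := by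
    rw [Fintype.sum_prod_type]
  rw [this]
  refine Finset.sum_ninvolution Prod.swap ?_ ?_ (fun _ => Finset.mem_univ _) ?_
  · intro p
    simp only [Prod.fst_swap, Prod.snd_swap, SimpleGraph.dist_comm (u := p.2)]
    rw [← two_mul, show (2 : ZMod 2) = 0 from rfl, zero_mul]
  · intro p hp hsw
    apply hp
    have : p.2 = p.1 := congrArg Prod.fst hsw
    rw [this, SimpleGraph.dist_self]
    simp
  · intro p
    rfl


/-- For a tree `T` on `n` vertices with Wiener index `S`, in the first-order subdivision
of `T` the sum of graph distances over all pairs consisting of one original vertex and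
one new edge-vertex equals `4S - n(n-1)`.  Here `S` is the Wiener index of `T`, i.e. the
sum of distances over all unordered pairs of distinct vertices of `T`. -/
theorem crossSum_firstSubdivision {V : Type} [Fintype V] (G : SimpleGraph V)
    [Fintype G.edgeSet] (hG : G.IsTree) :
    (∑ v : V, ∑ e : G.edgeSet,
        ((firstSubdivision G).dist (Sum.inl v) (Sum.inr e) : ℤ)) =
      4 * (((∑ u : V, ∑ v : V, G.dist u v) / 2 : ℕ) : ℤ) -
        (Fintype.card V : ℤ) * ((Fintype.card V : ℤ) - 1) := by
  classical
  have hne : Nonempty V := hG.isConnected.nonempty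
  have hm : Fintype.card G.edgeSet + 1 = Fintype.card V := by
    have := hG.card_edgeFinset
    rwa [SimpleGraph.edgeFinset_card] at this
  have hA : ∀ v : V, (∑ e : G.edgeSet,
      ((firstSubdivision G).dist (Sum.inl v) (Sum.inr e) : ℤ))
      = 2 * (∑ u : V, (G.dist v u : ℤ)) - (Fintype.card G.edgeSet : ℤ) := by
    intro v
    have h1 := sum_D hG v
    rw [Finset.sum_add_distrib, Finset.sum_const, Finset.card_univ, smul_eq_mul, mul_one] at h1
    have h2 : (∑ e : G.edgeSet,
        ((firstSubdivision G).dist (Sum.inl v) (Sum.inr e) : ℤ)) =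
        ((∑ e : G.edgeSet,
          Sym2.lift ⟨fun a b => G.dist v a + G.dist v b, fun a b => Nat.add_comm _ _⟩ e.val : ℕ) : ℤ) := by
      push_cast
      exact Finset.sum_congr rfl fun e _ => by exact_mod_cast subdiv_dist' hG v e
    rw [h2]
    have := congrArg (fun x : ℕ => (x : ℤ)) h1
    push_cast at this ⊢
    linarith
  rw [Finset.sum_congr rfl fun v _ => hA v]
  rw [Finset.sum_sub_distrib, Finset.sum_const, Finset.card_univ]
  obtain ⟨k, hk⟩ := total_even G
  have hS : ((∑ u : V, ∑ w : V, G.dist u w) / 2 : ℕ) = k := by omega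
  have hcast : (∑ v : V, 2 * (∑ u : V, (G.dist v u : ℤ)))
      = 2 * ((∑ u : V, ∑ w : V, G.dist u w : ℕ) : ℤ) := by
    push_cast
    rw [Finset.mul_sum]
  rw [hcast, hS, hk]
  have h1 : 1 ≤ Fintype.card V := Fintype.card_pos
  have : (Fintype.card G.edgeSet : ℤ) = (Fintype.card V : ℤ) - 1 := by
    have := congrArg (fun x : ℕ => (x : ℤ)) hm
    push_cast at this
    linarith
  rw [this]
  push_cast
  ring
end

section
/- Let T be a tree on n vertices with geodesic distance (Wiener index) S, and for t ≥ 1 let T'(t) be the result of applying the first-order subdivision operation t times, starting from T. Then the geodesic distance of T'(t) equals 8^t·S − (1/3)(2^{3t} − 2^t)(n−1) + (2^{2t−1} − 2^{3t−1})(n−1)². -/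
/-- A finite simple graph, bundled with its (finite) vertex type. -/
structure FinSimpleGraph where
  V : Type
  fV : Fintype V
  G : SimpleGraph V

attribute [instance] FinSimpleGraph.fV

/-- One application of the first-order subdivision operation to a bundled finite graph. -/
noncomputable def firstSubdivisionStep (X : FinSimpleGraph) : FinSimpleGraph :=
  letI : Fintype X.G.edgeSet := Fintype.ofFinite _
  { V := X.V ⊕ X.G.edgeSet, fV := inferInstance, G := firstSubdivision X.G }

/-- `t`-fold application of the first-order subdivision operation. -/
noncomputable def firstSubdivisionIter (X : FinSimpleGraph) : ℕ → FinSimpleGraph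
  | 0 => X
  | t + 1 => firstSubdivisionStep (firstSubdivisionIter X t)


open SimpleGraph Finset

namespace WSub


variable {V : Type}

/-- The invariant carried through the subdivision induction. -/
structure Nice (G : SimpleGraph V) : Prop where
  conn : G.Connected
  p1 : ∀ u x y, G.Adj x y → G.dist u x ≠ G.dist u y
  p2 : ∀ x y a b, G.Adj x y → G.Adj a b → s(x, y) ≠ s(a, b) →
      G.dist x a + G.dist y b = G.dist x b + G.dist y a
  p3 : ∀ v u w w', G.Adj u w → G.Adj u w' → w ≠ w' →
      ¬(G.dist v w + 1 = G.dist v u ∧ G.dist v w' + 1 = G.dist v u)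

lemma adj_dist_one {G : SimpleGraph V} (hc : G.Connected) {x y : V} (h : G.Adj x y) :
    G.dist x y = 1 := dist_eq_one_iff_adj.2 h

lemma adj_dist_le {G : SimpleGraph V} (hc : G.Connected) (u : V) {x y : V} (h : G.Adj x y) :
    G.dist u y ≤ G.dist u x + 1 := by
  have h1 := hc.dist_triangle (u := u) (v := x) (w := y)
  have h2 := adj_dist_one hc h
  omega

lemma Nice.cases {G : SimpleGraph V} (hN : Nice G) (u : V) {x y : V} (h : G.Adj x y) :
    G.dist u y = G.dist u x + 1 ∨ G.dist u x = G.dist u y + 1 := by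
  have h1 := adj_dist_le hN.conn u h
  have h2 := adj_dist_le hN.conn u h.symm
  have h3 := hN.p1 u x y h
  omega

lemma Nice.sides {G : SimpleGraph V} (hN : Nice G) {x y a b : V} (hxy : G.Adj x y)
    (hab : G.Adj a b) (hne : s(x, y) ≠ s(a, b)) :
    (G.dist x a + 1 = G.dist x b ∧ G.dist y a + 1 = G.dist y b) ∨
    (G.dist x b + 1 = G.dist x a ∧ G.dist y b + 1 = G.dist y a) := by
  have h1 := hN.cases x hab
  have h2 := hN.cases y hab
  have h3 := hN.p2 x y a b hxy hab hne
  omega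

section Tree

variable {G : SimpleGraph V} (hG : G.IsTree)

include hG

lemma tree_split {u v w : V} (p : G.Walk u v) (hw : w ∈ p.support) :
    G.dist u w + G.dist w v ≤ p.length := by
  classical
  have h1 := G.dist_le (p.takeUntil w hw)
  have h2 := G.dist_le (p.dropUntil w hw)
  have h3 : (p.takeUntil w hw).length + (p.dropUntil w hw).length = p.length := by
    rw [← SimpleGraph.Walk.length_append, SimpleGraph.Walk.take_spec]
  omega

lemma tree_p1 (u : V) {x y : V} (h : G.Adj x y) : G.dist u x ≠ G.dist u y := by
  classical
  intro he
  have hc := hG.isConnected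
  obtain ⟨P, hPp, hPl⟩ := hc.exists_path_of_dist u x
  obtain ⟨Q, hQp, hQl⟩ := hc.exists_path_of_dist u y
  have hy : y ∉ P.support := by
    intro hy
    have h1 := tree_split hG P hy
    have h2 : 1 ≤ G.dist y x := hc.pos_dist_of_ne h.ne'
    have h3 := G.dist_le (P.takeUntil y hy)
    have h4 : G.dist u y ≤ (P.takeUntil y hy).length := G.dist_le _
    omega
  have hPy : (P.concat h).IsPath := by
    rw [← SimpleGraph.Walk.isPath_reverse_iff, SimpleGraph.Walk.reverse_concat]
    exact hPp.reverse.cons (by simpa using hy)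
  have heq : P.concat h = Q := (hG.existsUnique_path u y).unique hPy hQp
  have hl : (P.concat h).length = Q.length := by rw [heq]
  rw [SimpleGraph.Walk.length_concat] at hl
  omega

lemma tree_p3 (v u : V) {w w' : V} (h : G.Adj u w) (h' : G.Adj u w') (hne : w ≠ w') :
    ¬(G.dist v w + 1 = G.dist v u ∧ G.dist v w' + 1 = G.dist v u) := by
  classical
  rintro ⟨e1, e2⟩
  have hc := hG.isConnected
  obtain ⟨P, hPp, hPl⟩ := hc.exists_path_of_dist v w
  obtain ⟨Q, hQp, hQl⟩ := hc.exists_path_of_dist v w'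
  have huP : u ∉ P.support := by
    intro hu
    have h1 := tree_split hG P hu
    have h2 : 1 ≤ G.dist u w := hc.pos_dist_of_ne h.ne
    omega
  have huQ : u ∉ Q.support := by
    intro hu
    have h1 := tree_split hG Q hu
    have h2 : 1 ≤ G.dist u w' := hc.pos_dist_of_ne h'.ne
    omega
  have hP2 : (P.concat h.symm).IsPath := by
    rw [← SimpleGraph.Walk.isPath_reverse_iff, SimpleGraph.Walk.reverse_concat]
    exact hPp.reverse.cons (by simpa using huP)
  have hQ2 : (Q.concat h'.symm).IsPath := by
    rw [← SimpleGraph.Walk.isPath_reverse_iff, SimpleGraph.Walk.reverse_concat]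
    exact hQp.reverse.cons (by simpa using huQ)
  have heq : P.concat h.symm = Q.concat h'.symm := (hG.existsUnique_path v u).unique hP2 hQ2
  obtain ⟨hv, -⟩ := SimpleGraph.Walk.concat_inj heq
  exact hne hv

lemma tree_mixed {x y a b : V} (hxy : G.Adj x y) (hab : G.Adj a b)
    (hne : s(x, y) ≠ s(a, b)) (h1 : G.dist x a + 1 = G.dist x b)
    (h2 : G.dist y b + 1 = G.dist y a) : False := by
  classical
  have hc := hG.isConnected
  have hxb : G.dist x b ≤ 1 + G.dist y b := by
    have := hc.dist_triangle (u := x) (v := y) (w := b)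
    have := adj_dist_one hc hxy
    omega
  have hya : G.dist y a ≤ 1 + G.dist x a := by
    have := hc.dist_triangle (u := y) (v := x) (w := a)
    have := adj_dist_one hc hxy.symm
    omega
  have hpq : G.dist x a = G.dist y b := by omega
  obtain ⟨P, hPp, hPl⟩ := hc.exists_path_of_dist x a
  obtain ⟨Q, hQp, hQl⟩ := hc.exists_path_of_dist y b
  have hxQ : x ∉ Q.support := by
    intro hx
    have := tree_split hG Q hx
    omega
  have hR1 : (SimpleGraph.Walk.cons hxy Q).IsPath := hQp.cons hxQ
  have hbP : b ∉ P.support := by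
    intro hb
    have := tree_split hG P hb
    have : 1 ≤ G.dist b a := hc.pos_dist_of_ne hab.ne'
    omega
  have hR2 : (P.concat hab).IsPath := by
    rw [← SimpleGraph.Walk.isPath_reverse_iff, SimpleGraph.Walk.reverse_concat]
    exact hPp.reverse.cons (by simpa using hbP)
  have heq : SimpleGraph.Walk.cons hxy Q = P.concat hab :=
    (hG.existsUnique_path x b).unique hR1 hR2
  have hy : y ∈ (P.concat hab).support := by
    rw [← heq]; simp
  rw [SimpleGraph.Walk.support_concat] at hy
  rw [List.mem_append, List.mem_singleton] at hy
  rcases hy with hy | hy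
  · have := tree_split hG P hy
    omega
  · subst hy
    have hxa : x = a := by
      have h0 : G.dist y y = 0 := SimpleGraph.dist_self
      exact (SimpleGraph.Connected.dist_eq_zero_iff hc).1 (by omega)
    exact hne (by rw [hxa])

lemma tree_nice : Nice G := by
  refine ⟨hG.isConnected, fun u x y h => tree_p1 hG u h, ?_, fun v u w w' h h' hne =>
    tree_p3 hG v u h h' hne⟩
  intro x y a b hxy hab hne
  have hcx : G.dist x b = G.dist x a + 1 ∨ G.dist x a = G.dist x b + 1 := by
    have h1 := adj_dist_le hG.isConnected x hab
    have h2 := adj_dist_le hG.isConnected x hab.symm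
    have h3 := tree_p1 hG x hab
    omega
  have hcy : G.dist y b = G.dist y a + 1 ∨ G.dist y a = G.dist y b + 1 := by
    have h1 := adj_dist_le hG.isConnected y hab
    have h2 := adj_dist_le hG.isConnected y hab.symm
    have h3 := tree_p1 hG y hab
    omega
  have hm1 : ¬(G.dist x a + 1 = G.dist x b ∧ G.dist y b + 1 = G.dist y a) := by
    rintro ⟨u1, u2⟩; exact tree_mixed hG hxy hab hne u1 u2
  have hm2 : ¬(G.dist x b + 1 = G.dist x a ∧ G.dist y a + 1 = G.dist y b) := by
    rintro ⟨u1, u2⟩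
    refine tree_mixed hG hxy hab.symm ?_ u1 u2
    rw [Sym2.eq_swap (a := a)] at hne
    exact hne
  omega

end Tree

end WSub
section Part2
open SimpleGraph Finset Sum
namespace WSub
section Sub

variable {V : Type} (G : SimpleGraph V)

lemma exists_ends (e : G.edgeSet) : ∃ p : V × V, G.Adj p.1 p.2 ∧ s(p.1, p.2) = (e : Sym2 V) := by
  obtain ⟨e', he⟩ := e
  induction e' using Sym2.ind with
  | _ x y => exact ⟨(x, y), G.mem_edgeSet.1 he, rfl⟩

noncomputable def eA (e : G.edgeSet) : V := (exists_ends G e).choose.1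
noncomputable def eB (e : G.edgeSet) : V := (exists_ends G e).choose.2

lemma eAB_adj (e : G.edgeSet) : G.Adj (eA G e) (eB G e) := (exists_ends G e).choose_spec.1

lemma eAB_ne (e : G.edgeSet) : eA G e ≠ eB G e := (eAB_adj G e).ne

lemma eAB_mk (e : G.edgeSet) : s(eA G e, eB G e) = (e : Sym2 V) :=
  (exists_ends G e).choose_spec.2

lemma mem_iff_ends {v : V} {e : G.edgeSet} :
    v ∈ (e : Sym2 V) ↔ v = eA G e ∨ v = eB G e := by
  rw [← eAB_mk G e]; exact Sym2.mem_iff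

lemma eA_mem (e : G.edgeSet) : eA G e ∈ (e : Sym2 V) := (mem_iff_ends G).2 (Or.inl rfl)
lemma eB_mem (e : G.edgeSet) : eB G e ∈ (e : Sym2 V) := (mem_iff_ends G).2 (Or.inr rfl)

lemma sub_adj_inl_inr {v : V} {e : G.edgeSet} :
    (firstSubdivision G).Adj (inl v) (inr e) ↔ v ∈ (e : Sym2 V) := by
  rw [firstSubdivision, SimpleGraph.fromRel_adj]
  simp

lemma sub_adj_inr_inl {v : V} {e : G.edgeSet} :
    (firstSubdivision G).Adj (inr e) (inl v) ↔ v ∈ (e : Sym2 V) := by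
  rw [adj_comm]; exact sub_adj_inl_inr G

lemma sub_adj_inl_inl {v w : V} : ¬ (firstSubdivision G).Adj (inl v) (inl w) := by
  rw [firstSubdivision, SimpleGraph.fromRel_adj]
  simp

lemma sub_adj_inr_inr {e f : G.edgeSet} : ¬ (firstSubdivision G).Adj (inr e) (inr f) := by
  rw [firstSubdivision, SimpleGraph.fromRel_adj]
  simp

lemma exists_dwalk {u v : V} (p : G.Walk u v) :
    ∃ w : (firstSubdivision G).Walk (inl u) (inl v), w.length = 2 * p.length := by
  induction p with
  | nil => exact ⟨.nil, rfl⟩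
  | @cons u x v h p ih =>
    obtain ⟨w, hw⟩ := ih
    have h1 : (firstSubdivision G).Adj (inl u) (inr ⟨s(u, x), h⟩) :=
      (sub_adj_inl_inr G).2 (by simp)
    have h2 : (firstSubdivision G).Adj (inr ⟨s(u, x), h⟩) (inl x) :=
      (sub_adj_inr_inl G).2 (by simp)
    exact ⟨.cons h1 (.cons h2 w), by simp [hw]; ring⟩

lemma sub_conn (hc : G.Connected) : (firstSubdivision G).Connected := by
  have key : ∀ α : V ⊕ G.edgeSet, ∃ v, (firstSubdivision G).Reachable α (inl v) := by
    rintro (v | e)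
    · exact ⟨v, Reachable.refl _⟩
    · exact ⟨eA G e, ((sub_adj_inr_inl G).2 (eA_mem G e)).reachable⟩
  rw [connected_iff]
  refine ⟨fun α β => ?_, ⟨inl hc.nonempty.some⟩⟩
  obtain ⟨v, hv⟩ := key α
  obtain ⟨w, hw⟩ := key β
  obtain ⟨p⟩ := hc.preconnected v w
  obtain ⟨q, -⟩ := exists_dwalk G p
  exact (hv.trans q.reachable).trans hw.symm

lemma pot_bound (φ : V ⊕ G.edgeSet → ℤ)
    (hφ : ∀ a b, (firstSubdivision G).Adj a b → |φ a - φ b| ≤ 1)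
    {α β : V ⊕ G.edgeSet} (w : (firstSubdivision G).Walk α β) :
    |φ α - φ β| ≤ w.length := by
  induction w with
  | nil => simp
  | @cons a b c h p ih =>
    calc |φ a - φ c| ≤ |φ a - φ b| + |φ b - φ c| := abs_sub_le _ _ _
      _ ≤ 1 + p.length := add_le_add (hφ _ _ h) ih
      _ = (SimpleGraph.Walk.cons h p).length := by
          rw [SimpleGraph.Walk.length_cons]; push_cast; ring

noncomputable def pot (u : V) : V ⊕ G.edgeSet → ℤ
  | inl v => 2 * G.dist u v
  | inr e => G.dist u (eA G e) + G.dist u (eB G e)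

variable {G}

lemma pot_adj (hN : Nice G) (u : V) :
    ∀ a b, (firstSubdivision G).Adj a b → |pot G u a - pot G u b| ≤ 1 := by
  have main : ∀ (v : V) (e : G.edgeSet), v ∈ (e : Sym2 V) →
      |pot G u (inl v) - pot G u (inr e)| ≤ 1 := by
    intro v e hv
    have hd := hN.cases u (eAB_adj G e)
    rw [abs_sub_le_iff]
    rcases (mem_iff_ends G).1 hv with rfl | rfl <;> simp only [pot] <;> omega
  rintro (v | e) (w | f) h
  · exact absurd h (sub_adj_inl_inl G)
  · exact main v f ((sub_adj_inl_inr G).1 h)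
  · rw [abs_sub_comm]; exact main w e ((sub_adj_inr_inl G).1 h)
  · exact absurd h (sub_adj_inr_inr G)

lemma distAA (hN : Nice G) (u v : V) :
    (firstSubdivision G).dist (inl u) (inl v) = 2 * G.dist u v := by
  have hc' := sub_conn G hN.conn
  refine le_antisymm ?_ ?_
  · obtain ⟨p, -, hpl⟩ := hN.conn.exists_path_of_dist u v
    obtain ⟨w, hw⟩ := exists_dwalk G p
    have := SimpleGraph.dist_le w
    omega
  · obtain ⟨w, hwl⟩ := hc'.exists_walk_length_eq_dist (inl u) (inl v)
    have hb := pot_bound G (pot G u) (pot_adj hN u) w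
    rw [hwl] at hb
    simp only [pot, SimpleGraph.dist_self] at hb
    rw [abs_sub_le_iff] at hb
    omega

lemma distAE (hN : Nice G) (u : V) (e : G.edgeSet) :
    (firstSubdivision G).dist (inl u) (inr e) = G.dist u (eA G e) + G.dist u (eB G e) := by
  have hc' := sub_conn G hN.conn
  refine le_antisymm ?_ ?_
  · rcases hN.cases u (eAB_adj G e) with hd | hd
    · obtain ⟨p, -, hpl⟩ := hN.conn.exists_path_of_dist u (eA G e)
      obtain ⟨w, hw⟩ := exists_dwalk G p
      have hadj : (firstSubdivision G).Adj (inl (eA G e)) (inr e) :=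
        (sub_adj_inl_inr G).2 (eA_mem G e)
      have := SimpleGraph.dist_le (w.concat hadj)
      rw [SimpleGraph.Walk.length_concat] at this
      omega
    · obtain ⟨p, -, hpl⟩ := hN.conn.exists_path_of_dist u (eB G e)
      obtain ⟨w, hw⟩ := exists_dwalk G p
      have hadj : (firstSubdivision G).Adj (inl (eB G e)) (inr e) :=
        (sub_adj_inl_inr G).2 (eB_mem G e)
      have := SimpleGraph.dist_le (w.concat hadj)
      rw [SimpleGraph.Walk.length_concat] at this
      omega
  · obtain ⟨w, hwl⟩ := hc'.exists_walk_length_eq_dist (inl u) (inr e)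
    have hb := pot_bound G (pot G u) (pot_adj hN u) w
    rw [hwl] at hb
    simp only [pot, SimpleGraph.dist_self] at hb
    rw [abs_sub_le_iff] at hb
    omega

lemma distEE (hN : Nice G) {e f : G.edgeSet} (hef : e ≠ f) :
    2 * (firstSubdivision G).dist (inr e) (inr f) =
      G.dist (eA G e) (eA G f) + G.dist (eA G e) (eB G f) +
      G.dist (eB G e) (eA G f) + G.dist (eB G e) (eB G f) := by
  have hc' := sub_conn G hN.conn
  have h1 := distAE hN (eA G e) f
  have h2 := distAE hN (eB G e) f
  have hone1 : (firstSubdivision G).dist (inr e) (inl (eA G e)) = 1 :=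
    dist_eq_one_iff_adj.2 ((sub_adj_inr_inl G).2 (eA_mem G e))
  have hone2 : (firstSubdivision G).dist (inr e) (inl (eB G e)) = 1 :=
    dist_eq_one_iff_adj.2 ((sub_adj_inr_inl G).2 (eB_mem G e))
  have tri1 : (firstSubdivision G).dist (inl (eA G e)) (inr f) ≤
      1 + (firstSubdivision G).dist (inr e) (inr f) := by
    have := hc'.dist_triangle (u := inl (eA G e)) (v := inr e) (w := inr f)
    rwa [SimpleGraph.dist_comm (u := inl (eA G e)) (v := inr e), hone1] at this
  have tri1' : (firstSubdivision G).dist (inr e) (inr f) ≤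
      1 + (firstSubdivision G).dist (inl (eA G e)) (inr f) := by
    have := hc'.dist_triangle (u := inr e) (v := inl (eA G e)) (w := inr f)
    rwa [hone1] at this
  have tri2 : (firstSubdivision G).dist (inl (eB G e)) (inr f) ≤
      1 + (firstSubdivision G).dist (inr e) (inr f) := by
    have := hc'.dist_triangle (u := inl (eB G e)) (v := inr e) (w := inr f)
    rwa [SimpleGraph.dist_comm (u := inl (eB G e)) (v := inr e), hone2] at this
  have tri2' : (firstSubdivision G).dist (inr e) (inr f) ≤
      1 + (firstSubdivision G).dist (inl (eB G e)) (inr f) := by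
    have := hc'.dist_triangle (u := inr e) (v := inl (eB G e)) (w := inr f)
    rwa [hone2] at this
  have hne : s(eA G f, eB G f) ≠ s(eA G e, eB G e) := by
    rw [eAB_mk, eAB_mk]
    exact fun h => hef (Subtype.coe_injective h).symm
  have hsides := hN.sides (eAB_adj G f) (eAB_adj G e) hne
  have c1 : G.dist (eA G f) (eA G e) = G.dist (eA G e) (eA G f) := SimpleGraph.dist_comm
  have c2 : G.dist (eA G f) (eB G e) = G.dist (eB G e) (eA G f) := SimpleGraph.dist_comm
  have c3 : G.dist (eB G f) (eA G e) = G.dist (eA G e) (eB G f) := SimpleGraph.dist_comm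
  have c4 : G.dist (eB G f) (eB G e) = G.dist (eB G e) (eB G f) := SimpleGraph.dist_comm
  omega

end Sub
end WSub
end Part2

section Part3
open SimpleGraph Finset Sum
namespace WSub

variable {V : Type} {G : SimpleGraph V}

lemma distEA (hN : Nice G) (v : V) (e : G.edgeSet) :
    (firstSubdivision G).dist (inr e) (inl v) = G.dist v (eA G e) + G.dist v (eB G e) := by
  rw [SimpleGraph.dist_comm]; exact distAE hN v e

lemma ends_split {v : V} {e : G.edgeSet} (hv : v ∈ (e : Sym2 V)) :
    ∃ o : V, G.Adj v o ∧ s(v, o) = (e : Sym2 V) ∧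
      ((v = eA G e ∧ o = eB G e) ∨ (v = eB G e ∧ o = eA G e)) := by
  rcases (mem_iff_ends G).1 hv with rfl | rfl
  · exact ⟨eB G e, eAB_adj G e, eAB_mk G e, Or.inl ⟨rfl, rfl⟩⟩
  · exact ⟨eA G e, (eAB_adj G e).symm, by rw [Sym2.eq_swap]; exact eAB_mk G e,
      Or.inr ⟨rfl, rfl⟩⟩

lemma edge_ne_of_mk_ne {e f : G.edgeSet} (hef : e ≠ f) {x y a b : V}
    (hx : s(x, y) = (e : Sym2 V)) (ha : s(a, b) = (f : Sym2 V)) : s(x, y) ≠ s(a, b) := by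
  rw [hx, ha]
  exact fun h => hef (Subtype.coe_injective h)

/-- If the midpoint of `e` is one step closer to `inr g` than `inl u` (with `u ∈ e`),
then the other endpoint `o` of `e` is the `G`-parent of `u` seen from both ends of `g`. -/
lemma parent_step (hN : Nice G) {g e : G.edgeSet} (hge : g ≠ e) {u o : V}
    (hadj : G.Adj u o) (hmk : s(u, o) = (e : Sym2 V))
    (hcond : (firstSubdivision G).dist (inr g) (inr e) + 1 =
      (firstSubdivision G).dist (inr g) (inl u)) :
    G.dist (eA G g) o + 1 = G.dist (eA G g) u ∧ G.dist (eB G g) o + 1 = G.dist (eB G g) u := by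
  have hEE := distEE hN hge
  have hEA := distEA hN u g
  have hsides := hN.sides (eAB_adj G g) hadj
    (edge_ne_of_mk_ne (hge) (eAB_mk G g) hmk)
  have hsp : (u = eA G e ∧ o = eB G e) ∨ (u = eB G e ∧ o = eA G e) := by
    rw [← eAB_mk G e, Sym2.eq_iff] at hmk
    tauto
  have c1 : G.dist u (eA G g) = G.dist (eA G g) u := SimpleGraph.dist_comm
  have c2 : G.dist u (eB G g) = G.dist (eB G g) u := SimpleGraph.dist_comm
  rcases hsp with ⟨rfl, rfl⟩ | ⟨rfl, rfl⟩ <;>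
  · have c3 : G.dist (eA G e) (eA G g) = G.dist (eA G g) (eA G e) := SimpleGraph.dist_comm
    have c4 : G.dist (eA G e) (eB G g) = G.dist (eB G g) (eA G e) := SimpleGraph.dist_comm
    have c5 : G.dist (eB G e) (eA G g) = G.dist (eA G g) (eB G e) := SimpleGraph.dist_comm
    have c6 : G.dist (eB G e) (eB G g) = G.dist (eB G g) (eB G e) := SimpleGraph.dist_comm
    omega

lemma sub_p1 (hN : Nice G) : ∀ (α x y : V ⊕ G.edgeSet), (firstSubdivision G).Adj x y →
    (firstSubdivision G).dist α x ≠ (firstSubdivision G).dist α y := by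
  have hc' := sub_conn G hN.conn
  have main : ∀ (α : V ⊕ G.edgeSet) (v : V) (e : G.edgeSet), v ∈ (e : Sym2 V) →
      (firstSubdivision G).dist α (inl v) ≠ (firstSubdivision G).dist α (inr e) := by
    rintro (u | g) v e hv
    · have h1 := distAA hN u v
      have h2 := distAE hN u e
      have h3 := hN.p1 u _ _ (eAB_adj G e)
      rcases (mem_iff_ends G).1 hv with rfl | rfl <;> omega
    · by_cases hge : g = e
      · subst hge
        have h1 : (firstSubdivision G).dist (inr g) (inl v) = 1 :=
          dist_eq_one_iff_adj.2 ((sub_adj_inr_inl G).2 hv)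
        have h2 : (firstSubdivision G).dist (inr g) (inr g) = 0 := SimpleGraph.dist_self
        omega
      · have hEE := distEE hN hge
        have hEA := distEA hN v g
        have hp2 := hN.p2 _ _ _ _ (eAB_adj G g) (eAB_adj G e)
          (edge_ne_of_mk_ne hge (eAB_mk G g) (eAB_mk G e))
        have hp1a := hN.p1 (eA G g) _ _ (eAB_adj G e)
        have hp1b := hN.p1 (eB G g) _ _ (eAB_adj G e)
        have c1 : G.dist v (eA G g) = G.dist (eA G g) v := SimpleGraph.dist_comm
        have c2 : G.dist v (eB G g) = G.dist (eB G g) v := SimpleGraph.dist_comm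
        rcases (mem_iff_ends G).1 hv with rfl | rfl <;> omega
  rintro α (v | e) (w | f) h
  · exact absurd h (sub_adj_inl_inl G)
  · exact main α v f ((sub_adj_inl_inr G).1 h)
  · exact (main α w e ((sub_adj_inr_inl G).1 h)).symm
  · exact absurd h (sub_adj_inr_inr G)

lemma sub_p2_main (hN : Nice G) (v : V) (e : G.edgeSet) (w : V) (f : G.edgeSet)
    (hv : v ∈ (e : Sym2 V)) (hw : w ∈ (f : Sym2 V))
    (hne : s(Sum.inl v, (inr e : V ⊕ G.edgeSet)) ≠ s(inl w, inr f)) :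
    (firstSubdivision G).dist (inl v) (inl w) + (firstSubdivision G).dist (inr e) (inr f) =
      (firstSubdivision G).dist (inl v) (inr f) +
      (firstSubdivision G).dist (inr e) (inl w) := by
  have hAA := distAA hN v w
  have hAE := distAE hN v f
  have hEA := distEA hN w e
  by_cases hef : e = f
  · subst hef
    have hvw : v ≠ w := by
      intro h; subst h; exact hne rfl
    have h0 : (firstSubdivision G).dist (inr e) (inr e) = 0 := SimpleGraph.dist_self
    have h1 := adj_dist_one hN.conn (eAB_adj G e)
    have h1' := adj_dist_one hN.conn (eAB_adj G e).symm
    have hsA : G.dist (eA G e) (eA G e) = 0 := SimpleGraph.dist_self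
    have hsB : G.dist (eB G e) (eB G e) = 0 := SimpleGraph.dist_self
    rcases (mem_iff_ends G).1 hv with rfl | rfl <;> rcases (mem_iff_ends G).1 hw with rfl | rfl <;>
      first
        | exact absurd rfl hvw
        | omega
  · have hEE := distEE hN hef
    have hp2 := hN.p2 _ _ _ _ (eAB_adj G e) (eAB_adj G f)
      (edge_ne_of_mk_ne hef (eAB_mk G e) (eAB_mk G f))
    have c1 : G.dist w (eA G e) = G.dist (eA G e) w := SimpleGraph.dist_comm
    have c2 : G.dist w (eB G e) = G.dist (eB G e) w := SimpleGraph.dist_comm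
    rcases (mem_iff_ends G).1 hv with rfl | rfl <;> rcases (mem_iff_ends G).1 hw with rfl | rfl <;>
      omega

lemma adj_shape {x y : V ⊕ G.edgeSet} (h : (firstSubdivision G).Adj x y) :
    (∃ v e, x = inl v ∧ y = inr e ∧ v ∈ (e : Sym2 V)) ∨
    (∃ v e, x = inr e ∧ y = inl v ∧ v ∈ (e : Sym2 V)) := by
  rcases x with v | e <;> rcases y with w | f
  · exact absurd h (sub_adj_inl_inl G)
  · exact Or.inl ⟨v, f, rfl, rfl, (sub_adj_inl_inr G).1 h⟩
  · exact Or.inr ⟨w, e, rfl, rfl, (sub_adj_inr_inl G).1 h⟩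
  · exact absurd h (sub_adj_inr_inr G)

lemma sub_p2 (hN : Nice G) : ∀ x y a b : V ⊕ G.edgeSet, (firstSubdivision G).Adj x y →
    (firstSubdivision G).Adj a b → s(x, y) ≠ s(a, b) →
    (firstSubdivision G).dist x a + (firstSubdivision G).dist y b =
      (firstSubdivision G).dist x b + (firstSubdivision G).dist y a := by
  intro x y a b h1 h2 hne
  rcases adj_shape h1 with ⟨v, e, rfl, rfl, hv⟩ | ⟨v, e, rfl, rfl, hv⟩ <;>
    rcases adj_shape h2 with ⟨w, f, rfl, rfl, hw⟩ | ⟨w, f, rfl, rfl, hw⟩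
  · exact sub_p2_main hN v e w f hv hw hne
  · have := sub_p2_main hN v e w f hv hw
      (by rwa [Sym2.eq_swap (a := (inr f : V ⊕ G.edgeSet))] at hne)
    omega
  · have := sub_p2_main hN v e w f hv hw
      (by rwa [Sym2.eq_swap (a := (inr e : V ⊕ G.edgeSet))] at hne)
    omega
  · have := sub_p2_main hN v e w f hv hw
      (by rw [Sym2.eq_swap (a := (inr e : V ⊕ G.edgeSet)), Sym2.eq_swap
        (a := (inr f : V ⊕ G.edgeSet))] at hne; exact hne)
    omega

lemma sub_p3 (hN : Nice G) : ∀ α β γ γ' : V ⊕ G.edgeSet, (firstSubdivision G).Adj β γ →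
    (firstSubdivision G).Adj β γ' → γ ≠ γ' →
    ¬((firstSubdivision G).dist α γ + 1 = (firstSubdivision G).dist α β ∧
      (firstSubdivision G).dist α γ' + 1 = (firstSubdivision G).dist α β) := by
  have hc' := sub_conn G hN.conn
  rintro α (u | e) γ γ' hγ hγ' hne ⟨hd1, hd2⟩
  · -- β = inl u, neighbours are subdivision vertices
    obtain ⟨e, rfl, he⟩ : ∃ e, γ = inr e ∧ u ∈ (e : Sym2 V) := by
      rcases γ with w | e
      · exact absurd hγ (by rw [adj_comm]; exact sub_adj_inl_inl G)
      · exact ⟨e, rfl, ((sub_adj_inr_inl G).1 hγ.symm)⟩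
    obtain ⟨f, rfl, hf⟩ : ∃ f, γ' = inr f ∧ u ∈ (f : Sym2 V) := by
      rcases γ' with w | f
      · exact absurd hγ' (by rw [adj_comm]; exact sub_adj_inl_inl G)
      · exact ⟨f, rfl, ((sub_adj_inr_inl G).1 hγ'.symm)⟩
    have hef : e ≠ f := fun h => hne (by rw [h])
    obtain ⟨oe, hoe_adj, hoe_mk, -⟩ := ends_split he
    obtain ⟨of, hof_adj, hof_mk, -⟩ := ends_split hf
    have hoo : oe ≠ of := by
      intro h
      subst h
      exact hef (Subtype.coe_injective (hoe_mk.symm.trans hof_mk))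
    rcases α with v | g
    · -- α = inl v
      have h1 := distAE hN v e
      have h2 := distAE hN v f
      have h3 := distAA hN v u
      have hsp1 : (u = eA G e ∧ oe = eB G e) ∨ (u = eB G e ∧ oe = eA G e) := by
        rw [← eAB_mk G e, Sym2.eq_iff] at hoe_mk; tauto
      have hsp2 : (u = eA G f ∧ of = eB G f) ∨ (u = eB G f ∧ of = eA G f) := by
        rw [← eAB_mk G f, Sym2.eq_iff] at hof_mk; tauto
      have key1 : G.dist v oe + 1 = G.dist v u := by
        rcases hsp1 with ⟨h4, h5⟩ | ⟨h4, h5⟩ <;> rw [← h4, ← h5] at h1 <;> omega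
      have key2 : G.dist v of + 1 = G.dist v u := by
        rcases hsp2 with ⟨h4, h5⟩ | ⟨h4, h5⟩ <;> rw [← h4, ← h5] at h2 <;> omega
      exact hN.p3 v u oe of hoe_adj hof_adj hoo ⟨key1, key2⟩
    · -- α = inr g
      by_cases hge : g = e
      · subst hge
        have h0 : (firstSubdivision G).dist (inr g) (inr g) = 0 := SimpleGraph.dist_self
        have h1 : (firstSubdivision G).dist (inr g) (inl u) = 1 :=
          dist_eq_one_iff_adj.2 ((sub_adj_inr_inl G).2 he)
        have h2 : (firstSubdivision G).dist (inr g) (inr f) = 0 := by omega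
        have := (hc'.dist_eq_zero_iff).1 h2
        simp only [inr.injEq] at this
        exact hef this
      · by_cases hgf : g = f
        · subst hgf
          have h0 : (firstSubdivision G).dist (inr g) (inr g) = 0 := SimpleGraph.dist_self
          have h1 : (firstSubdivision G).dist (inr g) (inl u) = 1 :=
            dist_eq_one_iff_adj.2 ((sub_adj_inr_inl G).2 hf)
          have h2 : (firstSubdivision G).dist (inr g) (inr e) = 0 := by omega
          have := (hc'.dist_eq_zero_iff).1 h2
          simp only [inr.injEq] at this
          exact hef this.symm
        · have k1 := parent_step hN hge hoe_adj hoe_mk hd1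
          have k2 := parent_step hN hgf hof_adj hof_mk hd2
          exact hN.p3 (eA G g) u oe of hoe_adj hof_adj hoo ⟨k1.1, k2.1⟩
  · -- β = inr e, neighbours are original vertices
    obtain ⟨v, rfl, hv⟩ : ∃ v, γ = inl v ∧ v ∈ (e : Sym2 V) := by
      rcases γ with w | f
      · exact ⟨w, rfl, ((sub_adj_inr_inl G).1 hγ)⟩
      · exact absurd hγ (sub_adj_inr_inr G)
    obtain ⟨w, rfl, hw⟩ : ∃ w, γ' = inl w ∧ w ∈ (e : Sym2 V) := by
      rcases γ' with w | f
      · exact ⟨w, rfl, ((sub_adj_inr_inl G).1 hγ')⟩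
      · exact absurd hγ' (sub_adj_inr_inr G)
    have hvw : v ≠ w := fun h => hne (by rw [h])
    rcases α with z | g
    · have h1 := distAE hN z e
      have h2 := distAA hN z v
      have h3 := distAA hN z w
      rcases (mem_iff_ends G).1 hv with rfl | rfl <;> rcases (mem_iff_ends G).1 hw with rfl | rfl <;>
        first
          | exact hvw rfl
          | omega
    · by_cases hge : g = e
      · subst hge
        have h0 : (firstSubdivision G).dist (inr g) (inr g) = 0 := SimpleGraph.dist_self
        omega
      · have hEE := distEE hN hge
        have hEAv := distEA hN v g
        have hEAw := distEA hN w g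
        have c1 : G.dist v (eA G g) = G.dist (eA G g) v := SimpleGraph.dist_comm
        have c2 : G.dist v (eB G g) = G.dist (eB G g) v := SimpleGraph.dist_comm
        have c3 : G.dist w (eA G g) = G.dist (eA G g) w := SimpleGraph.dist_comm
        have c4 : G.dist w (eB G g) = G.dist (eB G g) w := SimpleGraph.dist_comm
        rcases (mem_iff_ends G).1 hv with rfl | rfl <;>
          rcases (mem_iff_ends G).1 hw with rfl | rfl <;>
          first
            | exact hvw rfl
            | omega

lemma sub_nice (hN : Nice G) : Nice (firstSubdivision G) :=
  ⟨sub_conn G hN.conn, sub_p1 hN, sub_p2 hN, sub_p3 hN⟩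

end WSub
end Part3

section Part4
open SimpleGraph Finset Sum
namespace WSub

variable {V : Type} {G : SimpleGraph V}

noncomputable def mkE (G : SimpleGraph V) (p : G.edgeSet × Bool) :
    (firstSubdivision G).edgeSet :=
  ⟨s(inl (if p.2 then eA G p.1 else eB G p.1), inr p.1), by
    rw [SimpleGraph.mem_edgeSet]
    refine (sub_adj_inl_inr G).2 ?_
    split
    · exact eA_mem G p.1
    · exact eB_mem G p.1⟩

lemma sub_edge_count (G : SimpleGraph V) :
    Nat.card (firstSubdivision G).edgeSet = 2 * Nat.card G.edgeSet := by
  have hf : Function.Bijective (mkE G) := by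
    constructor
    · rintro ⟨e, b⟩ ⟨f, b'⟩ h
      rw [mkE, mkE, Subtype.mk.injEq, Sym2.eq_iff] at h
      rcases h with ⟨h1, h2⟩ | ⟨h1, h2⟩
      · simp only [inr.injEq] at h2
        subst h2
        simp only [inl.injEq] at h1
        rcases b <;> rcases b' <;> simp_all
        · exact absurd h1.symm (eAB_ne G e)
        · exact absurd h1 (eAB_ne G e)
      · exact absurd h1 (by simp)
    · rintro ⟨q, hq⟩
      induction q using Sym2.ind with
      | _ α β =>
        have hadj : (firstSubdivision G).Adj α β := (SimpleGraph.mem_edgeSet _).1 hq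
        rcases adj_shape hadj with ⟨v, e, rfl, rfl, hv⟩ | ⟨v, e, rfl, rfl, hv⟩
        · rcases (mem_iff_ends G).1 hv with rfl | rfl
          · exact ⟨(e, true), by simp [mkE]⟩
          · exact ⟨(e, false), by simp [mkE]⟩
        · rcases (mem_iff_ends G).1 hv with rfl | rfl
          · exact ⟨(e, true), by simp [mkE, Sym2.eq_swap]⟩
          · exact ⟨(e, false), by simp [mkE, Sym2.eq_swap]⟩
  have := Nat.card_congr (Equiv.ofBijective _ hf)
  rw [Nat.card_prod] at this
  simp only [Nat.card_eq_fintype_card (α := Bool), Fintype.card_bool] at this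
  omega

lemma exists_parent (hc : G.Connected) {v u : V} (h : u ≠ v) :
    ∃ w, G.Adj w u ∧ G.dist v w + 1 = G.dist v u := by
  obtain ⟨p, hpl⟩ := hc.exists_walk_length_eq_dist v u
  have hpos : 1 ≤ G.dist v u := hc.pos_dist_of_ne h.symm
  cases hq : p.reverse with
  | nil =>
    have : p.reverse.length = 0 := by rw [hq]; rfl
    rw [SimpleGraph.Walk.length_reverse] at this
    omega
  | @cons _ x _ hadj q =>
    have hl : p.reverse.length = p.length := SimpleGraph.Walk.length_reverse _
    rw [hq, SimpleGraph.Walk.length_cons] at hl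
    have h1 : G.dist v x ≤ q.length := by
      have := SimpleGraph.dist_le q.reverse
      rwa [SimpleGraph.Walk.length_reverse] at this
    have h2 := adj_dist_le hc v (hadj.symm : G.Adj x u)
    exact ⟨x, hadj.symm, by omega⟩

section Sums

variable [Fintype V] [Fintype G.edgeSet]

noncomputable def far (v : V) (e : G.edgeSet) : V :=
  if G.dist v (eA G e) < G.dist v (eB G e) then eB G e else eA G e

noncomputable def near (v : V) (e : G.edgeSet) : V :=
  if G.dist v (eA G e) < G.dist v (eB G e) then eA G e else eB G e

lemma near_far (hN : Nice G) (v : V) (e : G.edgeSet) :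
    G.Adj (near v e) (far v e) ∧ s(near v e, far v e) = (e : Sym2 V) ∧
      G.dist v (near v e) + 1 = G.dist v (far v e) ∧
      G.dist v (eA G e) + G.dist v (eB G e) + 1 = 2 * G.dist v (far v e) := by
  have hd := hN.cases v (eAB_adj G e)
  unfold near far
  split
  · exact ⟨eAB_adj G e, eAB_mk G e, by omega, by omega⟩
  · exact ⟨(eAB_adj G e).symm, by rw [Sym2.eq_swap]; exact eAB_mk G e, by omega, by omega⟩

lemma sum_far (hN : Nice G) (v : V) :
    ∑ e : G.edgeSet, G.dist v (far v e) = ∑ u : V, G.dist v u := by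
  classical
  have main : ∑ e ∈ (univ : Finset G.edgeSet), G.dist v (far v e) =
      ∑ u ∈ (univ : Finset V).erase v, G.dist v u := by
    refine Finset.sum_bij (fun e _ => far v e) ?_ ?_ ?_ ?_
    · intro e _
      rw [Finset.mem_erase]
      refine ⟨?_, Finset.mem_univ _⟩
      intro hfv
      have h := (near_far hN v e).2.2.1
      rw [hfv, SimpleGraph.dist_self] at h
      omega
    · intro e _ f _ hef
      by_contra hne
      have h1 := near_far hN v e
      have h2 := near_far hN v f
      have hnn : near v e ≠ near v f := by
        intro h
        apply hne
        apply Subtype.coe_injective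
        show (e : Sym2 V) = (f : Sym2 V)
        rw [← h1.2.1, ← h2.2.1, h, hef]
      refine hN.p3 v (far v e) (near v e) (near v f) h1.1.symm ?_ hnn ⟨?_, ?_⟩
      · rw [hef]; exact h2.1.symm
      · exact h1.2.2.1
      · rw [hef]; exact h2.2.2.1
    · intro u hu
      rw [Finset.mem_erase] at hu
      obtain ⟨w, hadj, hw⟩ := exists_parent hN.conn hu.1
      refine ⟨⟨s(w, u), (SimpleGraph.mem_edgeSet G).2 hadj⟩, Finset.mem_univ _, ?_⟩
      set e0 : G.edgeSet := ⟨s(w, u), (SimpleGraph.mem_edgeSet G).2 hadj⟩ with he0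
      have hmk := eAB_mk G e0
      rw [show ((e0 : Sym2 V)) = s(w, u) from rfl, Sym2.eq_iff] at hmk
      show far v e0 = u
      unfold far
      rcases hmk with ⟨ha, hb⟩ | ⟨ha, hb⟩ <;> rw [ha, hb] <;> split <;>
        first
          | rfl
          | (exfalso; omega)
    · intros; rfl
  rw [main, Finset.sum_erase _ (by simp)]

lemma sumF1 (hN : Nice G) (v : V) :
    ∑ e : G.edgeSet, (G.dist v (eA G e) + G.dist v (eB G e)) + Fintype.card G.edgeSet =
      2 * ∑ u : V, G.dist v u := by
  have h1 : ∑ e : G.edgeSet, (G.dist v (eA G e) + G.dist v (eB G e)) + Fintype.card G.edgeSet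
      = ∑ e : G.edgeSet, (G.dist v (eA G e) + G.dist v (eB G e) + 1) := by
    rw [Finset.sum_add_distrib (g := fun _ => 1), Finset.sum_const, Finset.card_univ,
      smul_eq_mul, mul_one]
  rw [h1, Finset.sum_congr rfl (fun e _ => (near_far hN v e).2.2.2), ← Finset.mul_sum,
    sum_far hN v]

end Sums

/-- Evenness of the total distance sum. -/
lemma total_even (G' : SimpleGraph V) [Fintype V] :
    2 ∣ ∑ u : V, ∑ w : V, G'.dist u w := by
  classical
  rw [← ZMod.natCast_eq_zero_iff]
  push_cast
  have hps : (∑ u : V, ∑ w : V, ((G'.dist u w : ℕ) : ZMod 2)) =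
      ∑ p : V × V, ((G'.dist p.1 p.2 : ℕ) : ZMod 2) := by
    rw [Fintype.sum_prod_type]
  rw [hps]
  refine Finset.sum_ninvolution Prod.swap ?_ ?_ (fun _ => Finset.mem_univ _) (fun _ => rfl)
  · intro p
    show ((G'.dist p.1 p.2 : ℕ) : ZMod 2) + ((G'.dist p.2 p.1 : ℕ) : ZMod 2) = 0
    rw [SimpleGraph.dist_comm (u := p.2) (v := p.1), ← two_mul]
    have h2 : (2 : ZMod 2) = 0 := rfl
    rw [h2, zero_mul]
  · rintro ⟨a, b⟩ hne heq
    have hab : b = a := congrArg Prod.fst heq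
    subst hab
    simp [SimpleGraph.dist_self] at hne

lemma two_wiener (G' : SimpleGraph V) [Fintype V] :
    2 * wienerIndex G' = ∑ u : V, ∑ w : V, G'.dist u w := by
  rw [wienerIndex, Nat.mul_div_cancel' (total_even G')]

end WSub
end Part4

section Part5
open SimpleGraph Finset Sum
namespace WSub

variable {V : Type} {G : SimpleGraph V} [Fintype V] [Fintype G.edgeSet]

lemma sub_total (hN : Nice G) :
    (∑ α : V ⊕ G.edgeSet, ∑ β : V ⊕ G.edgeSet, (firstSubdivision G).dist α β)
      + Fintype.card G.edgeSet + Fintype.card G.edgeSet * Fintype.card G.edgeSet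
      + 3 * (Fintype.card V * Fintype.card G.edgeSet)
      = 8 * ∑ u : V, ∑ w : V, G.dist u w := by
  classical
  set n := Fintype.card V with hn
  set m := Fintype.card G.edgeSet with hm
  set T := ∑ u : V, ∑ w : V, G.dist u w with hT
  set M := ∑ u : V, ∑ e : G.edgeSet, (G.dist u (eA G e) + G.dist u (eB G e)) with hM
  have hMT : M + n * m = 2 * T := by
    calc M + n * m = ∑ u : V, (∑ e : G.edgeSet, (G.dist u (eA G e) + G.dist u (eB G e)) + m) := by
          rw [Finset.sum_add_distrib, Finset.sum_const, Finset.card_univ, smul_eq_mul, mul_comm]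
      _ = ∑ u : V, 2 * ∑ w : V, G.dist u w := Finset.sum_congr rfl fun u _ => sumF1 hN u
      _ = 2 * T := by rw [hT, Finset.mul_sum]
  have hAA : (∑ u : V, ∑ w : V, (firstSubdivision G).dist (inl u) (inl w)) = 2 * T := by
    rw [hT, Finset.mul_sum]
    refine Finset.sum_congr rfl fun u _ => ?_
    rw [Finset.mul_sum]
    exact Finset.sum_congr rfl fun w _ => distAA hN u w
  have hAE : (∑ u : V, ∑ e : G.edgeSet, (firstSubdivision G).dist (inl u) (inr e)) = M := by
    rw [hM]
    exact Finset.sum_congr rfl fun u _ => Finset.sum_congr rfl fun e _ => distAE hN u e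
  have hEA : (∑ e : G.edgeSet, ∑ u : V, (firstSubdivision G).dist (inr e) (inl u)) = M := by
    rw [hM, Finset.sum_comm]
    exact Finset.sum_congr rfl fun u _ => Finset.sum_congr rfl fun e _ => distEA hN u e
  set EE := ∑ e : G.edgeSet, ∑ f : G.edgeSet, (firstSubdivision G).dist (inr e) (inr f) with hEE
  set Q := ∑ e : G.edgeSet, ∑ f : G.edgeSet,
    (G.dist (eA G e) (eA G f) + G.dist (eA G e) (eB G f) +
     G.dist (eB G e) (eA G f) + G.dist (eB G e) (eB G f)) with hQ
  have hkey : ∀ e f : G.edgeSet, 2 * (firstSubdivision G).dist (inr e) (inr f) +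
      (if e = f then 2 else 0) =
      G.dist (eA G e) (eA G f) + G.dist (eA G e) (eB G f) +
      G.dist (eB G e) (eA G f) + G.dist (eB G e) (eB G f) := by
    intro e f
    by_cases hef : e = f
    · subst hef
      rw [if_pos rfl]
      have h0 : (firstSubdivision G).dist (inr e) (inr e) = 0 := SimpleGraph.dist_self
      have h1 := adj_dist_one hN.conn (eAB_adj G e)
      have h2 := adj_dist_one hN.conn (eAB_adj G e).symm
      have h3 : G.dist (eA G e) (eA G e) = 0 := SimpleGraph.dist_self
      have h4 : G.dist (eB G e) (eB G e) = 0 := SimpleGraph.dist_self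
      omega
    · rw [if_neg hef]
      have := distEE hN hef
      omega
  have hQE : 2 * EE + 2 * m = Q := by
    have : ∑ e : G.edgeSet, ∑ f : G.edgeSet,
        (2 * (firstSubdivision G).dist (inr e) (inr f) + (if e = f then 2 else 0)) = Q := by
      rw [hQ]
      exact Finset.sum_congr rfl fun e _ => Finset.sum_congr rfl fun f _ => hkey e f
    rw [← this]
    have hsplit : ∀ e : G.edgeSet, ∑ f : G.edgeSet,
        (2 * (firstSubdivision G).dist (inr e) (inr f) + (if e = f then 2 else 0)) =
        2 * ∑ f : G.edgeSet, (firstSubdivision G).dist (inr e) (inr f) + 2 := by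
      intro e
      rw [Finset.sum_add_distrib, ← Finset.mul_sum, Finset.sum_ite_eq]
      simp
    rw [Finset.sum_congr rfl fun e _ => hsplit e, Finset.sum_add_distrib, ← Finset.mul_sum,
      Finset.sum_const, Finset.card_univ, smul_eq_mul]
    ring
  have hQM : Q + 2 * (m * m) = 2 * M := by
    have hinner : ∀ e : G.edgeSet, (∑ f : G.edgeSet,
        (G.dist (eA G e) (eA G f) + G.dist (eA G e) (eB G f) +
         G.dist (eB G e) (eA G f) + G.dist (eB G e) (eB G f))) + 2 * m =
        2 * (∑ u : V, G.dist (eA G e) u + ∑ u : V, G.dist (eB G e) u) := by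
      intro e
      have k1 := sumF1 hN (eA G e)
      have k2 := sumF1 hN (eB G e)
      have hsp : ∑ f : G.edgeSet,
          (G.dist (eA G e) (eA G f) + G.dist (eA G e) (eB G f) +
           G.dist (eB G e) (eA G f) + G.dist (eB G e) (eB G f)) =
          ∑ f : G.edgeSet, (G.dist (eA G e) (eA G f) + G.dist (eA G e) (eB G f)) +
          ∑ f : G.edgeSet, (G.dist (eB G e) (eA G f) + G.dist (eB G e) (eB G f)) := by
        rw [← Finset.sum_add_distrib]
        exact Finset.sum_congr rfl fun f _ => by ring
      omega
    have hsum := Finset.sum_congr rfl fun e (_ : e ∈ (univ : Finset G.edgeSet)) => hinner e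
    rw [Finset.sum_add_distrib, Finset.sum_const, Finset.card_univ, smul_eq_mul] at hsum
    have hR2 : ∑ e : G.edgeSet, (∑ u : V, G.dist (eA G e) u + ∑ u : V, G.dist (eB G e) u)
        = M := by
      rw [hM, Finset.sum_comm]
      refine Finset.sum_congr rfl fun e _ => ?_
      rw [← Finset.sum_add_distrib]
      refine Finset.sum_congr rfl fun u _ => ?_
      rw [SimpleGraph.dist_comm (u := eA G e) (v := u), SimpleGraph.dist_comm (u := eB G e)]
    rw [← Finset.mul_sum, hR2] at hsum
    have hmm : m * (2 * m) = 2 * (m * m) := by ring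
    rw [hmm] at hsum
    rw [hQ]
    omega
  have hsplitall : (∑ α : V ⊕ G.edgeSet, ∑ β : V ⊕ G.edgeSet, (firstSubdivision G).dist α β) =
      ((∑ u : V, ∑ w : V, (firstSubdivision G).dist (inl u) (inl w)) +
       (∑ u : V, ∑ e : G.edgeSet, (firstSubdivision G).dist (inl u) (inr e))) +
      ((∑ e : G.edgeSet, ∑ u : V, (firstSubdivision G).dist (inr e) (inl u)) +
       (∑ e : G.edgeSet, ∑ f : G.edgeSet, (firstSubdivision G).dist (inr e) (inr f))) := by
    rw [Fintype.sum_sum_type]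
    congr 1
    · rw [← Finset.sum_add_distrib]
      exact Finset.sum_congr rfl fun u _ => Fintype.sum_sum_type _
    · rw [← Finset.sum_add_distrib]
      exact Finset.sum_congr rfl fun e _ => Fintype.sum_sum_type _
  rw [hsplitall, hAA, hAE, hEA, ← hEE]
  linarith [hMT, hQE, hQM]

lemma step_wiener (hN : Nice G) (hcard : Fintype.card G.edgeSet + 1 = Fintype.card V) :
    wienerIndex (firstSubdivision G) + 2 * (Fintype.card V * Fintype.card G.edgeSet) =
      8 * wienerIndex G := by
  have h1 := two_wiener (firstSubdivision G)
  have h2 := two_wiener G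
  have h3 := sub_total hN
  set n := Fintype.card V
  set m := Fintype.card G.edgeSet
  have hmm : m * m + m = n * m := by
    calc m * m + m = m * (m + 1) := by ring
      _ = m * n := by rw [hcard]
      _ = n * m := mul_comm _ _
  linarith [h1, h2, h3, hmm]

end WSub
end Part5

section Part6
open SimpleGraph Finset Sum
namespace WSub

lemma wienerIndex_congr {W : Type} (i1 i2 : Fintype W) (G' : SimpleGraph W) :
    @wienerIndex W i1 G' = @wienerIndex W i2 G' := by
  cases Subsingleton.elim i1 i2; rfl

lemma master_step (X : FinSimpleGraph) (hN : Nice X.G)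
    (hcard : Nat.card X.G.edgeSet + 1 = Nat.card X.V) :
    Nice (firstSubdivisionStep X).G ∧
    (Nat.card (firstSubdivisionStep X).G.edgeSet + 1 = Nat.card (firstSubdivisionStep X).V) ∧
    (Nat.card (firstSubdivisionStep X).V + 1 = 2 * Nat.card X.V) ∧
    (wienerIndex (firstSubdivisionStep X).G +
      2 * (Nat.card X.V * Nat.card X.G.edgeSet) = 8 * wienerIndex X.G) := by
  letI : Fintype X.G.edgeSet := Fintype.ofFinite _
  refine ⟨sub_nice hN, ?_, ?_, ?_⟩
  · show Nat.card (firstSubdivision X.G).edgeSet + 1 = Nat.card (X.V ⊕ X.G.edgeSet)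
    rw [sub_edge_count, Nat.card_sum]
    omega
  · show Nat.card (X.V ⊕ X.G.edgeSet) + 1 = 2 * Nat.card X.V
    rw [Nat.card_sum]
    omega
  · have hc : Fintype.card X.G.edgeSet + 1 = Fintype.card X.V := by
      rw [← Nat.card_eq_fintype_card, ← Nat.card_eq_fintype_card]
      exact hcard
    have hs := step_wiener (G := X.G) hN hc
    have hcongr : wienerIndex (firstSubdivisionStep X).G =
        wienerIndex (firstSubdivision X.G) :=
      wienerIndex_congr _ _ _
    rw [hcongr, Nat.card_eq_fintype_card, Nat.card_eq_fintype_card]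
    exact hs

lemma algebra_step (S μ : ℚ) (t : ℕ) :
    8 * (8 ^ t * S - (1 / 3) * ((2 : ℚ) ^ (3 * t) - 2 ^ t) * μ
        + ((2 : ℚ) ^ (2 * t - 1) - 2 ^ (3 * t - 1)) * μ ^ 2)
      - 2 * ((2 ^ t * μ + 1) * (2 ^ t * μ))
    = 8 ^ (t + 1) * S - (1 / 3) * ((2 : ℚ) ^ (3 * (t + 1)) - 2 ^ (t + 1)) * μ
      + ((2 : ℚ) ^ (2 * (t + 1) - 1) - 2 ^ (3 * (t + 1) - 1)) * μ ^ 2 := by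
  rcases t with _ | s
  · norm_num
    ring
  · set x := (2 : ℚ) ^ s with hx
    have n1 : 2 * (s + 1) - 1 = 2 * s + 1 := by omega
    have n2 : 3 * (s + 1) - 1 = 3 * s + 2 := by omega
    have n3 : 2 * (s + 1 + 1) - 1 = 2 * s + 3 := by omega
    have n4 : 3 * (s + 1 + 1) - 1 = 3 * s + 5 := by omega
    rw [n1, n2, n3, n4]
    have e0 : (8 : ℚ) ^ s = x ^ 3 := by
      rw [show (8 : ℚ) = 2 ^ 3 by norm_num, ← pow_mul, mul_comm 3 s, pow_mul]
    have e8a : (8 : ℚ) ^ (s + 1) = 8 * x ^ 3 := by rw [pow_succ, e0]; ring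
    have e8b : (8 : ℚ) ^ (s + 1 + 1) = 64 * x ^ 3 := by rw [pow_succ, e8a]; ring
    have e2a : (2 : ℚ) ^ (s + 1) = 2 * x := by rw [pow_succ]; ring
    have e2b : (2 : ℚ) ^ (s + 1 + 1) = 4 * x := by rw [pow_succ, e2a]; ring
    have e3a : (2 : ℚ) ^ (3 * (s + 1)) = 8 * x ^ 3 := by
      rw [show 3 * (s + 1) = s * 3 + 3 by ring, pow_add, pow_mul, hx]; ring
    have e3b : (2 : ℚ) ^ (3 * (s + 1 + 1)) = 64 * x ^ 3 := by
      rw [show 3 * (s + 1 + 1) = s * 3 + 6 by ring, pow_add, pow_mul, hx]; ring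
    have e21 : (2 : ℚ) ^ (2 * s + 1) = 2 * x ^ 2 := by
      rw [show 2 * s + 1 = s * 2 + 1 by ring, pow_add, pow_mul, hx]; ring
    have e32 : (2 : ℚ) ^ (3 * s + 2) = 4 * x ^ 3 := by
      rw [show 3 * s + 2 = s * 3 + 2 by ring, pow_add, pow_mul, hx]; ring
    have e23 : (2 : ℚ) ^ (2 * s + 3) = 8 * x ^ 2 := by
      rw [show 2 * s + 3 = s * 2 + 3 by ring, pow_add, pow_mul, hx]; ring
    have e35 : (2 : ℚ) ^ (3 * s + 5) = 32 * x ^ 3 := by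
      rw [show 3 * s + 5 = s * 3 + 5 by ring, pow_add, pow_mul, hx]; ring
    rw [e8a, e8b, e2a, e2b, e3a, e3b, e21, e32, e23, e35]
    ring

lemma iter_all {V : Type} [Fintype V] (G : SimpleGraph V) (hG : G.IsTree) (t : ℕ) :
    Nice (firstSubdivisionIter ⟨V, inferInstance, G⟩ t).G ∧
    (Nat.card (firstSubdivisionIter ⟨V, inferInstance, G⟩ t).G.edgeSet + 1 =
      Nat.card (firstSubdivisionIter ⟨V, inferInstance, G⟩ t).V) ∧
    (Nat.card (firstSubdivisionIter ⟨V, inferInstance, G⟩ t).V =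
      2 ^ t * (Fintype.card V - 1) + 1) ∧
    ((wienerIndex (firstSubdivisionIter ⟨V, inferInstance, G⟩ t).G : ℚ) =
      8 ^ t * (wienerIndex G : ℚ)
        - (1 / 3) * ((2 : ℚ) ^ (3 * t) - 2 ^ t) * ((Fintype.card V : ℚ) - 1)
        + ((2 : ℚ) ^ (2 * t - 1) - 2 ^ (3 * t - 1)) * ((Fintype.card V : ℚ) - 1) ^ 2) := by
  have hn1 : 1 ≤ Fintype.card V := by
    have : Nonempty V := hG.isConnected.nonempty
    exact Fintype.card_pos
  induction t with
  | zero =>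
    refine ⟨tree_nice hG, ?_, ?_, ?_⟩
    · show Nat.card G.edgeSet + 1 = Nat.card V
      letI : Fintype G.edgeSet := Fintype.ofFinite _
      rw [Nat.card_eq_fintype_card, Nat.card_eq_fintype_card, ← SimpleGraph.edgeFinset_card]
      exact hG.card_edgeFinset
    · show Nat.card V = 2 ^ 0 * (Fintype.card V - 1) + 1
      rw [Nat.card_eq_fintype_card]
      simp only [pow_zero, one_mul]
      omega
    · show (wienerIndex G : ℚ) = _
      norm_num
  | succ t ih =>
    obtain ⟨ihN, ihE, ihV, ihW⟩ := ih
    obtain ⟨hN', hE', hV', hW'⟩ :=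
      master_step (firstSubdivisionIter ⟨V, inferInstance, G⟩ t) ihN ihE
    refine ⟨hN', hE', ?_, ?_⟩
    · show Nat.card (firstSubdivisionStep (firstSubdivisionIter ⟨V, inferInstance, G⟩ t)).V =
        2 ^ (t + 1) * (Fintype.card V - 1) + 1
      have h2 : Nat.card (firstSubdivisionStep
          (firstSubdivisionIter ⟨V, inferInstance, G⟩ t)).V + 1 =
          2 * (2 ^ t * (Fintype.card V - 1) + 1) := by rw [← ihV]; exact hV'
      have h3 : 2 ^ (t + 1) * (Fintype.card V - 1) = 2 * (2 ^ t * (Fintype.card V - 1)) := by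
        rw [pow_succ]; ring
      omega
    · -- Wiener index step
      have hedge : Nat.card (firstSubdivisionIter ⟨V, inferInstance, G⟩ t).G.edgeSet =
          2 ^ t * (Fintype.card V - 1) := by omega
      rw [ihV, hedge] at hW'
      have hμ : ((Fintype.card V - 1 : ℕ) : ℚ) = (Fintype.card V : ℚ) - 1 :=
        Nat.cast_sub hn1
      have hWQ : (wienerIndex (firstSubdivisionStep
            (firstSubdivisionIter ⟨V, inferInstance, G⟩ t)).G : ℚ) =
          8 * (wienerIndex (firstSubdivisionIter ⟨V, inferInstance, G⟩ t).G : ℚ)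
            - 2 * ((2 ^ t * ((Fintype.card V : ℚ) - 1) + 1) *
              (2 ^ t * ((Fintype.card V : ℚ) - 1))) := by
        have := congrArg (fun k : ℕ => (k : ℚ)) hW'
        push_cast [hμ] at this
        linarith [this]
      show (wienerIndex (firstSubdivisionStep
          (firstSubdivisionIter ⟨V, inferInstance, G⟩ t)).G : ℚ) = _
      rw [hWQ, ihW]
      exact algebra_step _ _ t

end WSub
end Part6

/-- For a tree `T` on `n` vertices with Wiener index `S`, the Wiener index of its `t`-fold
first-order subdivision `T'(t)` (with `t ≥ 1`) equals
`8^t·S − (1/3)(2^{3t} − 2^t)(n−1) + (2^{2t−1} − 2^{3t−1})(n−1)²`. -/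
theorem wiener_firstSubdivisionIter {V : Type} [Fintype V] (G : SimpleGraph V)
    (hG : G.IsTree) (t : ℕ) (ht : 1 ≤ t) :
    (wienerIndex (firstSubdivisionIter ⟨V, inferInstance, G⟩ t).G : ℚ) =
      8 ^ t * (wienerIndex G : ℚ)
        - (1 / 3) * ((2 : ℚ) ^ (3 * t) - 2 ^ t) * ((Fintype.card V : ℚ) - 1)
        + ((2 : ℚ) ^ (2 * t - 1) - 2 ^ (3 * t - 1)) * ((Fintype.card V : ℚ) - 1) ^ 2 :=
  (WSub.iter_all G hG t).2.2.2
end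

section
/- Fix an integer n ≥ 3. Define rational sequences Θ_t = (((n−2)t − 1)(n−1)^t + 1)/(n−2)², Ω_t = (2/(n−2)³)·(((n−2)t − 1)(n−1)^{2t} − ((n−2)t − 2)(n−1)^t − 1), and Γ_t by Γ_1 = 1 and Γ_t = (n−1)·Γ_{t−1} + ((n−1)(n−2)/2)·Ω_{t−1} + Θ_t for t ≥ 2. Then for all t ≥ 1, Γ_t = (n−1)^{t−1} + ((t−1)(n−1)^{t+1} − (n−1)^{t−1} + 1)/(n−2)² + (((n−2)t − n)(n−1)^{2t} + 2(n−1)^{t+1})/(n−2)³. -/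
/-- Fix `n ≥ 3`.  With `Θ_t = (((n−2)t − 1)(n−1)^t + 1)/(n−2)²` and
`Ω_t = (2/(n−2)³)·(((n−2)t − 1)(n−1)^{2t} − ((n−2)t − 2)(n−1)^t − 1)`, let `Γ` be the
rational sequence with `Γ_1 = 1` and
`Γ_t = (n−1)·Γ_{t−1} + ((n−1)(n−2)/2)·Ω_{t−1} + Θ_t` for `t ≥ 2`.  Then for all `t ≥ 1`,
`Γ_t = (n−1)^{t−1} + ((t−1)(n−1)^{t+1} − (n−1)^{t−1} + 1)/(n−2)²
      + (((n−2)t − n)(n−1)^{2t} + 2(n−1)^{t+1})/(n−2)³`. -/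
theorem gamma_closed_form (n : ℕ) (hn : 3 ≤ n) (Γ : ℕ → ℚ)
    (h1 : Γ 1 = 1)
    (hrec : ∀ t : ℕ, 2 ≤ t →
      Γ t = ((n : ℚ) - 1) * Γ (t - 1)
        + (((n : ℚ) - 1) * ((n : ℚ) - 2) / 2) *
            ((2 / ((n : ℚ) - 2) ^ 3) *
              ((((n : ℚ) - 2) * (↑(t - 1) : ℚ) - 1) * ((n : ℚ) - 1) ^ (2 * (t - 1))
                - (((n : ℚ) - 2) * (↑(t - 1) : ℚ) - 2) * ((n : ℚ) - 1) ^ (t - 1) - 1))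
        + ((((n : ℚ) - 2) * t - 1) * ((n : ℚ) - 1) ^ t + 1) / ((n : ℚ) - 2) ^ 2) :
    ∀ t : ℕ, 1 ≤ t →
      Γ t = ((n : ℚ) - 1) ^ (t - 1)
        + (((t : ℚ) - 1) * ((n : ℚ) - 1) ^ (t + 1) - ((n : ℚ) - 1) ^ (t - 1) + 1) /
            ((n : ℚ) - 2) ^ 2
        + ((((n : ℚ) - 2) * t - (n : ℚ)) * ((n : ℚ) - 1) ^ (2 * t)
            + 2 * ((n : ℚ) - 1) ^ (t + 1)) / ((n : ℚ) - 2) ^ 3 := by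
  have hn3 : (3:ℚ) ≤ (n:ℚ) := by exact_mod_cast hn
  have hn2 : (n:ℚ) - 2 ≠ 0 := by intro h; linarith [sub_eq_zero.mp h]
  intro t ht
  obtain ⟨s, rfl⟩ : ∃ s, t = s + 1 := ⟨t - 1, by omega⟩
  induction s with
  | zero =>
    simp only [h1]
    norm_num
  | succ s ih =>
    have IH := ih (by omega)
    have hr := hrec (s + 2) (by omega)
    have e1 : s + 2 - 1 = s + 1 := by omega
    rw [e1] at hr
    have e2 : s + 1 + 1 = s + 2 := by omega
    rw [hr, IH]
    push_cast
    simp only [Nat.add_sub_cancel, two_mul, pow_add]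
    field_simp
    ring
end
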